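/- arXiv:1206.3429 — 8 statements merged into one kernel-verified Lean document; each statement's English description precedes it below -/
import Mathlib

section
/- Let 0 < p < 1 and q = 1 − p. For all integers n, x, t and every real r with 0 < r < min(1, p/q), the contiguous relation p·F̃_n(x,t) = F̃_{n+1}(x+1,t+1) − F̃_{n+1}(x+1,t) holds; explicitly, p·∮_{|w|=r} (q + p/w)^t (1 − w)^{−n} w^{x−1} dw = ∮_{|w|=r} (q + p/w)^{t+1} (1 − w)^{−(n+1)} w^{x} dw − ∮_{|w|=r} (q + p/w)^{t} (1 − w)^{−(n+1)} w^{x} dw. -/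
open Complex

lemma sphere_facts {p r : ℝ} (hp0 : 0 < p) (hp1 : p < 1)
    (hr0 : 0 < r) (hr1 : r < min 1 (p / (1 - p))) {w : ℂ}
    (hw : w ∈ Metric.sphere (0 : ℂ) r) :
    w ≠ 0 ∧ (1 : ℂ) - w ≠ 0 ∧ ((1 - p : ℂ) + p / w) ≠ 0 := by
  have hq : (0 : ℝ) < 1 - p := by linarith
  have habs : ‖w‖ = r := by simpa using hw
  have hw0 : w ≠ 0 := by
    intro h; rw [h] at habs; simp at habs; linarith
  refine ⟨hw0, ?_, ?_⟩
  · intro h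
    have hw1 : w = 1 := by
      have := sub_eq_zero.mp h; exact this.symm
    rw [hw1] at habs; simp at habs
    have := lt_of_lt_of_le hr1 (min_le_left _ _)
    linarith
  · intro h
    have hq0 : ((1 : ℂ) - p) ≠ 0 := by
      simpa using Complex.ofReal_ne_zero.mpr (ne_of_gt hq)
    have hweq : w = -(p : ℂ) / ((1 : ℂ) - p) := by
      field_simp at h
      rw [eq_div_iff hq0]
      linear_combination h
    have : ‖w‖ = p / (1 - p) := by
      rw [hweq]
      have : (-(p : ℂ)) / ((1 : ℂ) - p) = ((-(p) / (1 - p) : ℝ) : ℂ) := by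
        push_cast; ring
      rw [this, Complex.norm_real, Real.norm_eq_abs, abs_div, abs_neg,
        abs_of_pos hp0, abs_of_pos hq]
    have hlt := lt_of_lt_of_le hr1 (min_le_right _ _)
    rw [habs] at this; linarith

/-- the contiguous relation `p·F̃_n(x,t) = F̃_{n+1}(x+1,t+1) − F̃_{n+1}(x+1,t)`
for the contour integrals defining `F̃`. -/
theorem contiguous_relation_time (p : ℝ) (hp0 : 0 < p) (hp1 : p < 1) (n x t : ℤ)
    (r : ℝ) (hr0 : 0 < r) (hr1 : r < min 1 (p / (1 - p))) :
    (p : ℂ) * (∮ w in C(0, r), ((1 - p : ℂ) + p / w) ^ t * (1 - w) ^ (-n) * w ^ (x - 1)) =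
      (∮ w in C(0, r), ((1 - p : ℂ) + p / w) ^ (t + 1) * (1 - w) ^ (-(n + 1)) * w ^ x) -
        (∮ w in C(0, r), ((1 - p : ℂ) + p / w) ^ t * (1 - w) ^ (-(n + 1)) * w ^ x) := by
  have hcont : ∀ (a b c : ℤ), ContinuousOn
      (fun w : ℂ => ((1 - p : ℂ) + p / w) ^ a * (1 - w) ^ b * w ^ c)
      (Metric.sphere (0 : ℂ) r) := by
    intro a b c
    apply ContinuousOn.mul
    apply ContinuousOn.mul
    · exact ((continuousOn_const.add (continuousOn_const.div continuousOn_id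
        (fun w hw => (sphere_facts hp0 hp1 hr0 hr1 hw).1))).zpow₀ a
        (fun w hw => Or.inl (sphere_facts hp0 hp1 hr0 hr1 hw).2.2))
    · exact (continuousOn_const.sub continuousOn_id).zpow₀ b
        (fun w hw => Or.inl (sphere_facts hp0 hp1 hr0 hr1 hw).2.1)
    · exact continuousOn_id.zpow₀ c
        (fun w hw => Or.inl (sphere_facts hp0 hp1 hr0 hr1 hw).1)
  have hint : ∀ (a b c : ℤ), CircleIntegrable
      (fun w : ℂ => ((1 - p : ℂ) + p / w) ^ a * (1 - w) ^ b * w ^ c) 0 r :=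
    fun a b c => (hcont a b c).circleIntegrable hr0.le
  rw [← circleIntegral.integral_sub (hint (t+1) (-(n+1)) x) (hint t (-(n+1)) x),
    ← circleIntegral.integral_const_mul]
  refine circleIntegral.integral_congr hr0.le (fun w hw => ?_)
  obtain ⟨hw0, hw1, hz0⟩ := sphere_facts hp0 hp1 hr0 hr1 hw
  rw [zpow_add_one₀ hz0]
  have h1 : ((1 : ℂ) - w) ^ (-(n + 1)) = (1 - w) ^ (-n) * (1 - w)⁻¹ := by
    rw [neg_add, zpow_add₀ hw1, zpow_neg_one]
  have h2 : w ^ (x - 1) = w ^ x * w⁻¹ := by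
    rw [sub_eq_add_neg, zpow_add₀ hw0, zpow_neg_one]
  rw [h1, h2]
  generalize ((1 - (p:ℂ)) + p / w) ^ t = Z
  generalize ((1:ℂ) - w) ^ (-n) = A
  generalize w ^ x = X
  field_simp
  ring
end

section
/- Let 0 < p < 1, q = 1 − p, and let b be a boundary with coordinates b(τ) = (x(τ), t(τ)) and exit weights π. Then for all τ₁, τ₂ ∈ ℤ and every radius r with 1/2 < r < 1/2 + p/q: π(τ₂)·[τ₂ ≥ τ₁] = (2πi)^{−1} ∮_{|w−1/2|=r} (q + p/w)^{t(τ₁)−t(τ₂)} w^{x(τ₁)−x(τ₂)+1} / ( w² (w−1) (1/w + 1/π(τ₂) − 1) ) dw, where [τ₂ ≥ τ₁] equals 1 if τ₂ ≥ τ₁ and 0 otherwise. -/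
open Complex

/-- A staircase-like boundary in the space-time plane: at each `τ` the boundary makes
either a horizontal step `(-1, 0)` or a vertical step `(0, 1)`. -/
structure Boundary where
  b : ℤ → ℤ × ℤ
  step : ∀ τ : ℤ, b (τ + 1) = b τ + (-1, 0) ∨ b (τ + 1) = b τ + (0, 1)

/-- Exit weight: `p` for a vertical step, `1` for a horizontal step. -/
def exitWeight (p : ℝ) (B : Boundary) (τ : ℤ) : ℝ :=
  if B.b (τ + 1) = B.b τ + (0, 1) then p else 1

section PhiAux
open Complex Metric


lemma sph_ne_zero {r : ℝ} (hr1 : 1/2 < r) {w : ℂ} (hw : w ∈ sphere (1/2:ℂ) r) : w ≠ 0 := by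
  rintro rfl
  rw [mem_sphere_iff_norm] at hw
  simp only [zero_sub, norm_neg] at hw
  rw [show ‖(1/2:ℂ)‖ = 1/2 by norm_num [norm_div, Complex.norm_ofNat]] at hw
  linarith

lemma sph_ne_one {r : ℝ} (hr1 : 1/2 < r) {w : ℂ} (hw : w ∈ sphere (1/2:ℂ) r) : w ≠ 1 := by
  rintro rfl
  rw [mem_sphere_iff_norm] at hw
  rw [show (1:ℂ) - 1/2 = 1/2 by ring] at hw
  rw [show ‖(1/2:ℂ)‖ = 1/2 by norm_num [norm_div, Complex.norm_ofNat]] at hw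
  linarith

lemma one_mem_ball' {r : ℝ} (hr1 : 1/2 < r) : (1:ℂ) ∈ ball (1/2:ℂ) r := by
  rw [mem_ball, dist_eq_norm, show (1:ℂ) - 1/2 = 1/2 by ring,
    show ‖(1/2:ℂ)‖ = 1/2 by norm_num [norm_div, Complex.norm_ofNat]]
  linarith

lemma zero_mem_ball' {r : ℝ} (hr1 : 1/2 < r) : (0:ℂ) ∈ ball (1/2:ℂ) r := by
  rw [mem_ball, dist_eq_norm, zero_sub, norm_neg,
    show ‖(1/2:ℂ)‖ = 1/2 by norm_num [norm_div, Complex.norm_ofNat]]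
  linarith

lemma sph_add_c_ne {c r : ℝ} (hc : 0 < c) (hr2 : r < 1/2 + c) {w : ℂ}
    (hw : w ∈ closedBall (1/2:ℂ) r) : w + (c:ℂ) ≠ 0 := by
  intro h
  have hw' : w = -(c:ℂ) := by linear_combination h
  subst hw'
  rw [mem_closedBall, dist_eq_norm, show -(c:ℂ) - 1/2 = -(((c + 1/2 : ℝ)):ℂ) by push_cast; ring,
    norm_neg, Complex.norm_real, Real.norm_eq_abs, abs_of_pos (by linarith)] at hw
  linarith

/-- Cauchy formula helper. -/
lemma cauchy_helper {r : ℝ} (hr1 : 1/2 < r) {f : ℂ → ℂ}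
    (hf : DifferentiableOn ℂ f (closedBall (1/2:ℂ) r)) :
    (∮ w in C((1/2:ℂ), r), f w / (w - 1)) = 2 * Real.pi * I * f 1 := by
  have hr0 : (0:ℝ) < r := by linarith
  have hcl : DiffContOnCl ℂ f (ball (1/2:ℂ) r) := by
    apply DifferentiableOn.diffContOnCl
    rwa [closure_ball _ hr0.ne']
  have := hcl.circleIntegral_sub_inv_smul (one_mem_ball' hr1)
  simp only [smul_eq_mul] at this
  rw [← this]
  apply circleIntegral.integral_congr hr0.le
  intro w _
  simp only
  ring

lemma lemA {c r : ℝ} (hc : 0 < c) (hr1 : 1/2 < r) (hr2 : r < 1/2 + c) (α n : ℤ) (hn : 0 ≤ n) :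
    (∮ w in C((1/2:ℂ), r), (w + (c:ℂ))^α * w^n / (w - 1))
      = 2 * Real.pi * I * (1 + (c:ℂ))^α := by
  have h := cauchy_helper hr1 (f := fun w => (w + (c:ℂ))^α * w^n) ?_
  · rw [h]; norm_num
  · intro x hx
    have h1 : DifferentiableAt ℂ (fun w : ℂ => (w + (c:ℂ))^α) x := by
      have : DifferentiableAt ℂ (fun w : ℂ => w + (c:ℂ)) x := by fun_prop
      exact this.zpow (Or.inl (sph_add_c_ne hc hr2 hx))
    have h2 : DifferentiableAt ℂ (fun w : ℂ => w^n) x :=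
      differentiableAt_id.zpow (Or.inr hn)
    exact (h1.mul h2).differentiableWithinAt

lemma lemM {r : ℝ} (hr1 : 1/2 < r) (j : ℤ) :
    (∮ w in C((1/2:ℂ), r), w^j) = if j = -1 then 2 * Real.pi * I else 0 := by
  split_ifs with h
  · subst h
    have := circleIntegral.integral_sub_inv_of_mem_ball (zero_mem_ball' hr1)
    simpa [zpow_neg, zpow_one] using this
  · simpa using circleIntegral.integral_sub_zpow_of_ne h (1/2:ℂ) 0 r

lemma ci_pow_div {r : ℝ} (hr1 : 1/2 < r) (j : ℤ) :
    CircleIntegrable (fun w : ℂ => w^j / (w - 1)) (1/2:ℂ) r := by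
  apply ContinuousOn.circleIntegrable (by linarith)
  intro w hw
  have h0 := sph_ne_zero hr1 hw
  have h1 := sph_ne_one hr1 hw
  apply ContinuousWithinAt.div
  · exact (continuousAt_zpow₀ _ _ (Or.inl h0)).continuousWithinAt
  · exact (continuous_sub_right 1).continuousWithinAt
  · exact sub_ne_zero.mpr h1

lemma ci_pow {r : ℝ} (hr1 : 1/2 < r) (j : ℤ) :
    CircleIntegrable (fun w : ℂ => w^j) (1/2:ℂ) r := by
  apply ContinuousOn.circleIntegrable (by linarith)
  intro w hw
  exact (continuousAt_zpow₀ _ _ (Or.inl (sph_ne_zero hr1 hw))).continuousWithinAt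

lemma ci_inv {r : ℝ} (hr0 : 0 ≤ r) {a : ℂ} (ha : a ∉ sphere (1/2:ℂ) r) :
    CircleIntegrable (fun w : ℂ => (w - a)⁻¹) (1/2:ℂ) r := by
  apply ContinuousOn.circleIntegrable hr0
  intro w hw
  exact ((continuous_sub_right a).continuousWithinAt).inv₀
    (sub_ne_zero.mpr (fun h => ha (h ▸ hw)))

lemma lemD_neg {r : ℝ} (hr1 : 1/2 < r) : ∀ k : ℕ,
    (∮ w in C((1/2:ℂ), r), w^(-1 - (k:ℤ)) / (w - 1)) = 0 := by
  have hr0 : (0:ℝ) ≤ r := by linarith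
  have hs1 : (1:ℂ) ∉ sphere (1/2:ℂ) r := fun h => sph_ne_one hr1 h rfl
  have hs0 : (0:ℂ) ∉ sphere (1/2:ℂ) r := fun h => sph_ne_zero hr1 h rfl
  intro k
  induction k with
  | zero =>
    have hcg : (∮ w in C((1/2:ℂ), r), w^(-1 - (0:ℕ):ℤ) / (w - 1))
        = ∮ w in C((1/2:ℂ), r), ((w - 1)⁻¹ - (w - 0)⁻¹) := by
      apply circleIntegral.integral_congr hr0
      intro w hw
      have h0 := sph_ne_zero hr1 hw
      have h1 : w - 1 ≠ 0 := sub_ne_zero.mpr (sph_ne_one hr1 hw)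
      simp only [Nat.cast_zero, sub_zero, zpow_neg, zpow_one]
      field_simp
      ring
    rw [hcg, circleIntegral.integral_sub (ci_inv hr0 hs1) (ci_inv hr0 hs0),
      circleIntegral.integral_sub_inv_of_mem_ball (one_mem_ball' hr1),
      circleIntegral.integral_sub_inv_of_mem_ball (zero_mem_ball' hr1), sub_self]
  | succ m ih =>
    have hcg : (∮ w in C((1/2:ℂ), r), w^(-1 - ((m+1:ℕ)):ℤ) / (w - 1))
        = ∮ w in C((1/2:ℂ), r), (w^(-1 - (m:ℤ)) / (w - 1) - w^(-1 - ((m+1:ℕ)):ℤ)) := by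
      apply circleIntegral.integral_congr hr0
      intro w hw
      have h0 := sph_ne_zero hr1 hw
      have h1 : w - 1 ≠ 0 := sub_ne_zero.mpr (sph_ne_one hr1 hw)
      have e : (-1 - (m:ℤ)) = (-1 - ((m+1:ℕ)):ℤ) + 1 := by push_cast; ring
      beta_reduce
      rw [e, zpow_add_one₀ h0]
      field_simp
      ring
    rw [hcg, circleIntegral.integral_sub (ci_pow_div hr1 _) (ci_pow hr1 _), ih,
      lemM hr1, if_neg (by push_cast; omega), zero_sub, neg_zero]

lemma lemD {r : ℝ} (hr1 : 1/2 < r) (j : ℤ) :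
    (∮ w in C((1/2:ℂ), r), w^j / (w - 1))
      = if 0 ≤ j then 2 * Real.pi * I else 0 := by
  split_ifs with h
  · have := cauchy_helper hr1 (f := fun w => w^j)
      (fun x _ => (differentiableAt_id.zpow (Or.inr h)).differentiableWithinAt)
    rw [this]
    simp
  · push_neg at h
    have : j = -1 - ((-1 - j).toNat : ℤ) := by omega
    rw [this]
    exact lemD_neg hr1 _

lemma ci_gen {r : ℝ} (hr1 : 1/2 < r) (K c : ℂ) (a : ℕ) (j : ℤ) :
    CircleIntegrable (fun w : ℂ => K * (w + c)^a * w^j / (w - 1)) (1/2:ℂ) r := by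
  apply ContinuousOn.circleIntegrable (by linarith)
  intro w hw
  have h0 := sph_ne_zero hr1 hw
  have h1 : w - 1 ≠ 0 := sub_ne_zero.mpr (sph_ne_one hr1 hw)
  exact ((((continuous_const.mul ((continuous_id.add continuous_const).pow a)).continuousWithinAt).mul
    (continuousAt_zpow₀ _ _ (Or.inl h0)).continuousWithinAt).div
    (continuous_sub_right 1).continuousWithinAt h1)

lemma lemB_nat {r : ℝ} (hr1 : 1/2 < r) (c : ℂ) :
    ∀ (a : ℕ) (K : ℂ) (n : ℤ), (a:ℤ) + n ≤ -1 →
    (∮ w in C((1/2:ℂ), r), K * (w + c)^a * w^n / (w - 1)) = 0 := by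
  have hr0 : (0:ℝ) ≤ r := by linarith
  intro a
  induction a with
  | zero =>
    intro K n hn
    have hcg : (∮ w in C((1/2:ℂ), r), K * (w + c)^(0:ℕ) * w^n / (w - 1))
        = ∮ w in C((1/2:ℂ), r), K • (w^n / (w - 1)) := by
      apply circleIntegral.integral_congr hr0
      intro w _
      simp [smul_eq_mul]
      ring
    rw [hcg, circleIntegral.integral_smul, lemD hr1, if_neg (by omega), smul_zero]
  | succ m ih =>
    intro K n hn
    have hcg : (∮ w in C((1/2:ℂ), r), K * (w + c)^(m+1:ℕ) * w^n / (w - 1))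
        = ∮ w in C((1/2:ℂ), r),
            (K * (w + c)^m * w^(n+1) / (w - 1) - (-(K*c)) * (w + c)^m * w^n / (w - 1)) := by
      apply circleIntegral.integral_congr hr0
      intro w hw
      have h0 := sph_ne_zero hr1 hw
      beta_reduce
      rw [zpow_add_one₀ h0, pow_succ]
      ring
    rw [hcg, circleIntegral.integral_sub (ci_gen hr1 K c m (n+1)) (ci_gen hr1 (-(K*c)) c m n),
      ih K (n+1) (by omega), ih (-(K*c)) n (by omega), sub_zero]

lemma lemB {r : ℝ} (hr1 : 1/2 < r) (c : ℂ) {α n : ℤ} (hα : 0 ≤ α) (hn : α + n ≤ -1) :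
    (∮ w in C((1/2:ℂ), r), (w + c)^α * w^n / (w - 1)) = 0 := by
  have hcg : (∮ w in C((1/2:ℂ), r), (w + c)^α * w^n / (w - 1))
      = ∮ w in C((1/2:ℂ), r), (1:ℂ) * (w + c)^(α.toNat) * w^n / (w - 1) := by
    apply circleIntegral.integral_congr (by linarith)
    intro w _
    beta_reduce
    rw [one_mul, ← zpow_natCast (w + c) α.toNat, Int.toNat_of_nonneg hα]
  rw [hcg]
  exact lemB_nat hr1 c α.toNat 1 n (by omega)

lemma bstep (B : Boundary) (τ : ℤ) :
    ((B.b (τ+1)).1 = (B.b τ).1 - 1 ∧ (B.b (τ+1)).2 = (B.b τ).2) ∨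
    ((B.b (τ+1)).1 = (B.b τ).1 ∧ (B.b (τ+1)).2 = (B.b τ).2 + 1) := by
  rcases B.step τ with h | h <;> [left; right] <;>
    constructor <;> rw [h] <;> simp [Prod.ext_iff] <;> ring

lemma int_mono {f : ℤ → ℤ} (h : ∀ τ, f τ ≤ f (τ + 1)) {a b : ℤ} (hab : a ≤ b) : f a ≤ f b := by
  exact Int.le_induction (motive := fun b _ => f a ≤ f b) (le_refl _) (fun m _ ih => le_trans ih (h m)) b hab

lemma t_mono (B : Boundary) {a b : ℤ} (hab : a ≤ b) : (B.b a).2 ≤ (B.b b).2 := by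
  apply int_mono (f := fun τ => (B.b τ).2) _ hab
  intro τ
  rcases bstep B τ with ⟨_, h⟩ | ⟨_, h⟩ <;> omega

lemma x_anti (B : Boundary) {a b : ℤ} (hab : a ≤ b) : (B.b b).1 ≤ (B.b a).1 := by
  have := int_mono (f := fun τ => -(B.b τ).1) ?_ hab
  · simpa using this
  intro τ
  rcases bstep B τ with ⟨h, _⟩ | ⟨h, _⟩ <;> omega

lemma diff_eq (B : Boundary) (a b : ℤ) :
    ((B.b b).2 - (B.b b).1) - ((B.b a).2 - (B.b a).1) = b - a := by
  have key : ∀ τ : ℤ, (B.b τ).2 - (B.b τ).1 - τ = (B.b 0).2 - (B.b 0).1 := by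
    intro τ
    induction τ using Int.induction_on with
    | zero => simp
    | succ n ih =>
      rcases bstep B n with ⟨h1, h2⟩ | ⟨h1, h2⟩ <;> push_cast <;> omega
    | pred n ih =>
      have e : (-(n:ℤ) - 1) = -((n:ℤ)+1) := by ring
      rcases bstep B (-((n:ℤ)+1)) with ⟨h1, h2⟩ | ⟨h1, h2⟩ <;>
        rw [show (-((n:ℤ)+1) + 1 : ℤ) = -(n:ℤ) by ring] at h1 h2 <;> rw [e] <;> omega
  have ha := key a
  have hb := key b
  omega

lemma ptv {p q c w : ℂ} (hq : q = 1 - p) (hc : c = p / q) (hp : p ≠ 0) (hq0 : q ≠ 0)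
    (hw0 : w ≠ 0) (hw1 : w - 1 ≠ 0) (hwc : w + c ≠ 0) (m k : ℤ) :
    (1 - p + p / w) ^ m * w ^ (k + 1) / (w ^ 2 * (w - 1) * (1 / w + 1 / p - 1))
      = (p * q ^ (m - 1)) * ((w + c) ^ (m - 1) * w ^ (k - m) / (w - 1)) := by
  have h1p : (1 : ℂ) - p ≠ 0 := by rw [← hq]; exact hq0
  have key : 1 - p + p / w = q * (w + c) / w := by
    rw [hc, hq]
    field_simp
  have keyD : 1 / w + 1 / p - 1 = q * (w + c) / (p * w) := by
    rw [hc, hq]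
    field_simp
    ring
  have hwm : w ^ (m - 1) ≠ 0 := zpow_ne_zero _ hw0
  have hwk : w ^ k ≠ 0 := zpow_ne_zero _ hw0
  have hcm : (w + c) ^ (m - 1) ≠ 0 := zpow_ne_zero _ hwc
  have hqm : q ^ (m - 1) ≠ 0 := zpow_ne_zero _ hq0
  rw [key, keyD, div_zpow, mul_zpow, zpow_add_one₀ hw0, zpow_sub₀ hw0,
    show m = (m - 1) + 1 by ring, zpow_add_one₀ hq0, zpow_add_one₀ hwc, zpow_add_one₀ hw0]
  field_simp [hp, hq0, hw0, hw1, hwc, hwm, hwk, hcm, hqm]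
  ring

lemma pth {p q c w : ℂ} (hq : q = 1 - p) (hc : c = p / q) (hp : p ≠ 0) (hq0 : q ≠ 0)
    (hw0 : w ≠ 0) (hw1 : w - 1 ≠ 0) (hwc : w + c ≠ 0) (m k : ℤ) :
    (1 - p + p / w) ^ m * w ^ (k + 1) / (w ^ 2 * (w - 1) * (1 / w + 1 / (1 : ℂ) - 1))
      = q ^ m * ((w + c) ^ m * w ^ (k - m) / (w - 1)) := by
  have h1p : (1 : ℂ) - p ≠ 0 := by rw [← hq]; exact hq0
  have key : 1 - p + p / w = q * (w + c) / w := by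
    rw [hc, hq]
    field_simp
  have hwm : w ^ m ≠ 0 := zpow_ne_zero m hw0
  have hwk : w ^ k ≠ 0 := zpow_ne_zero _ hw0
  have hcm : (w + c) ^ m ≠ 0 := zpow_ne_zero _ hwc
  have hqm : q ^ m ≠ 0 := zpow_ne_zero _ hq0
  rw [key, div_zpow, mul_zpow, zpow_add_one₀ hw0, zpow_sub₀ hw0]
  field_simp [hp, hq0, hw0, hw1, hwc, hwm, hwk, hcm, hqm]
  ring


theorem phi_aux (p : ℝ) (hp0 : 0 < p) (hp1 : p < 1)
    (B : Boundary) (τ₁ τ₂ : ℤ) (r : ℝ) (hr1 : 1/2 < r) (hr2 : r < 1/2 + p / (1 - p)) :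
    (if τ₁ ≤ τ₂ then ((if B.b (τ₂+1) = B.b τ₂ + (0,1) then p else 1 : ℝ) : ℂ) else 0) =
      (2 * Real.pi * Complex.I)⁻¹ *
        ∮ w in C(1/2, r),
          ((1 - p : ℂ) + p / w) ^ ((B.b τ₁).2 - (B.b τ₂).2) *
              w ^ ((B.b τ₁).1 - (B.b τ₂).1 + 1) /
            (w ^ 2 * (w - 1) *
              (1 / w + 1 / ((if B.b (τ₂+1) = B.b τ₂ + (0,1) then p else 1 : ℝ) : ℂ) - 1)) := by
  have hq : (0:ℝ) < 1 - p := by linarith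
  set cR : ℝ := p / (1 - p) with hcR
  have hc : 0 < cR := div_pos hp0 hq
  have hr0 : (0:ℝ) ≤ r := by linarith
  have hpi : (2 * (Real.pi:ℂ) * I) ≠ 0 := by
    simp [Real.pi_ne_zero, I_ne_zero]
  have hpne : (p:ℂ) ≠ 0 := ofReal_ne_zero.mpr hp0.ne'
  have hqC : (1:ℂ) - (p:ℂ) ≠ 0 := by
    rw [show (1:ℂ) - p = ((1 - p : ℝ) : ℂ) by push_cast; ring]
    exact ofReal_ne_zero.mpr hq.ne'
  have hcC : ((cR:ℝ):ℂ) = (p:ℂ) / (1 - (p:ℂ)) := by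
    rw [hcR]; push_cast; ring
  have hdiff := diff_eq B τ₁ τ₂
  set m : ℤ := (B.b τ₁).2 - (B.b τ₂).2 with hm
  set k : ℤ := (B.b τ₁).1 - (B.b τ₂).1 with hk
  have hkm : k - m = τ₂ - τ₁ := by omega
  have h1c : (1:ℂ) + (cR:ℝ) = ((1:ℂ) - p)⁻¹ := by
    rw [hcC]; field_simp; ring
  by_cases hv : B.b (τ₂ + 1) = B.b τ₂ + (0, 1)
  · rw [if_pos hv]
    have hcong : (∮ w in C((1/2:ℂ), r),
        ((1 - p : ℂ) + p / w) ^ m * w ^ (k + 1) /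
          (w ^ 2 * (w - 1) * (1 / w + 1 / ((p:ℝ) : ℂ) - 1)))
        = ∮ w in C((1/2:ℂ), r),
            ((p:ℂ) * (1 - (p:ℂ)) ^ (m - 1)) •
              ((w + ((cR:ℝ):ℂ)) ^ (m - 1) * w ^ (k - m) / (w - 1)) := by
      apply circleIntegral.integral_congr hr0
      intro w hw
      have hw0 := sph_ne_zero hr1 hw
      have hw1 : w - 1 ≠ 0 := sub_ne_zero.mpr (sph_ne_one hr1 hw)
      have hwc : w + ((cR:ℝ):ℂ) ≠ 0 := sph_add_c_ne hc hr2 (sphere_subset_closedBall hw)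
      beta_reduce
      rw [smul_eq_mul]
      exact ptv rfl hcC hpne hqC hw0 hw1 hwc m k
    rw [hcong, circleIntegral.integral_smul]
    rcases le_or_gt τ₁ τ₂ with hle | hlt
    · rw [if_pos hle, lemA hc hr1 hr2 (m-1) (k-m) (by omega)]
      rw [smul_eq_mul, h1c, inv_zpow, ← zpow_neg]
      have hone : (1 - (p:ℂ)) ^ (m-1) * (1 - (p:ℂ)) ^ (1-m) = 1 := by
        rw [← zpow_add₀ hqC, show (m-1) + (1-m) = 0 by ring, zpow_zero]
      field_simp
      linear_combination -(by rw [← zpow_add₀ hqC, add_neg_cancel, zpow_zero] :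
        (1 - (p:ℂ)) ^ (m-1) * (1 - (p:ℂ)) ^ (-(m-1)) = 1)
    · rw [if_neg (not_le.mpr hlt), lemB hr1 _ ?_ ?_, smul_zero, mul_zero]
      · have ht := t_mono B (by omega : τ₂ + 1 ≤ τ₁)
        have hv2 : (B.b (τ₂+1)).2 = (B.b τ₂).2 + 1 := by rw [hv]; rfl
        omega
      · have hx := x_anti B (le_of_lt hlt)
        omega
  · rw [if_neg hv]
    have hcong : (∮ w in C((1/2:ℂ), r),
        ((1 - p : ℂ) + p / w) ^ m * w ^ (k + 1) /
          (w ^ 2 * (w - 1) * (1 / w + 1 / ((1:ℝ) : ℂ) - 1)))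
        = ∮ w in C((1/2:ℂ), r),
            ((1 - (p:ℂ)) ^ m) • ((w + ((cR:ℝ):ℂ)) ^ m * w ^ (k - m) / (w - 1)) := by
      apply circleIntegral.integral_congr hr0
      intro w hw
      have hw0 := sph_ne_zero hr1 hw
      have hw1 : w - 1 ≠ 0 := sub_ne_zero.mpr (sph_ne_one hr1 hw)
      have hwc : w + ((cR:ℝ):ℂ) ≠ 0 := sph_add_c_ne hc hr2 (sphere_subset_closedBall hw)
      beta_reduce
      rw [smul_eq_mul]
      have := pth rfl hcC hpne hqC hw0 hw1 hwc m k
      rw [show ((1:ℝ):ℂ) = (1:ℂ) by norm_num]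
      exact this
    rw [hcong, circleIntegral.integral_smul]
    rcases le_or_gt τ₁ τ₂ with hle | hlt
    · rw [if_pos hle, lemA hc hr1 hr2 m (k-m) (by omega)]
      rw [smul_eq_mul, h1c, inv_zpow, ← zpow_neg]
      have hone : (1 - (p:ℂ)) ^ m * (1 - (p:ℂ)) ^ (-m) = 1 := by
        rw [← zpow_add₀ hqC, show m + (-m) = 0 by ring, zpow_zero]
      have hinv : (1 - (p:ℂ)) ^ m * ((1 - (p:ℂ)) ^ m)⁻¹ = 1 :=
        mul_inv_cancel₀ (zpow_ne_zero _ hqC)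
      field_simp
      linear_combination -hone + ofReal_one
    · rw [if_neg (not_le.mpr hlt), lemB hr1 _ ?_ ?_, smul_zero, mul_zero]
      · have ht := t_mono B (le_of_lt hlt)
        omega
      · rcases B.step τ₂ with hst | hst
        · have hx1' : (B.b (τ₂+1)).1 = (B.b τ₂).1 + (-1) := by rw [hst]; rfl
          have hx := x_anti B (by omega : τ₂ + 1 ≤ τ₁)
          omega
        · exact absurd hst hv

end PhiAux

/-- integral representation of the one-step transition function
`φ(τ₁,τ₂) = π(τ₂)·[τ₂ ≥ τ₁]`. -/
theorem phi_integral_representation (p : ℝ) (hp0 : 0 < p) (hp1 : p < 1)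
    (B : Boundary) (τ₁ τ₂ : ℤ) (r : ℝ) (hr1 : 1/2 < r) (hr2 : r < 1/2 + p / (1 - p)) :
    (if τ₁ ≤ τ₂ then (exitWeight p B τ₂ : ℂ) else 0) =
      (2 * Real.pi * Complex.I)⁻¹ *
        ∮ w in C(1/2, r),
          ((1 - p : ℂ) + p / w) ^ ((B.b τ₁).2 - (B.b τ₂).2) *
              w ^ ((B.b τ₁).1 - (B.b τ₂).1 + 1) /
            (w ^ 2 * (w - 1) * (1 / w + 1 / (exitWeight p B τ₂ : ℂ) - 1)) := by
  simp only [exitWeight]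
  exact phi_aux p hp0 hp1 B τ₁ τ₂ r hr1 hr2
end

section
/- Let 0 < p < 1, q = 1 − p, and let b be a boundary with coordinates b(τ) = (x(τ), t(τ)) and exit weights π. Define φ^{(1)}(τ₁, τ₂) = π(τ₂)·[τ₂ ≥ τ₁] and, recursively for m ≥ 1, φ^{(m+1)}(τ₁, τ₂) = ∑_{z = τ₁}^{τ₂} φ^{(1)}(τ₁, z) · φ^{(m)}(z, τ₂) (a finite sum, zero when τ₂ < τ₁). Then for every m ≥ 1, all τ₁, τ₂ ∈ ℤ and every radius r with 1/2 < r < 1/2 + p/q: φ^{(m)}(τ₁, τ₂) = (2πi)^{−1} ∮_{|w−1/2|=r} (q + p/w)^{t(τ₁)−t(τ₂)} w^{x(τ₁)−x(τ₂)+m} / ( w² (w−1)^m (1/w + 1/π(τ₂) − 1) ) dw. -/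
open Complex Metric

/-- The one-step transition function `φ^{(1)}(τ₁,τ₂) = π(τ₂)·[τ₂ ≥ τ₁]`. -/
def phiOne (p : ℝ) (B : Boundary) (τ₁ τ₂ : ℤ) : ℝ :=
  if τ₁ ≤ τ₂ then exitWeight p B τ₂ else 0

/-- `phiM p B m = φ^{(m+1)}`: the `(m+1)`-fold convolution, defined recursively by
`φ^{(m+1)}(τ₁,τ₂) = ∑_{z=τ₁}^{τ₂} φ^{(1)}(τ₁,z)·φ^{(m)}(z,τ₂)`. -/
noncomputable def phiM (p : ℝ) (B : Boundary) : ℕ → ℤ → ℤ → ℝ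
  | 0 => phiOne p B
  | m + 1 => fun τ₁ τ₂ => ∑ z ∈ Finset.Icc τ₁ τ₂, phiOne p B τ₁ z * phiM p B m z τ₂

namespace SAux

/-- Hypotheses bundle. -/
structure Good (p r : ℝ) : Prop where
  hp0 : 0 < p
  hp1 : p < 1
  hr1 : 1/2 < r
  hr2 : r < 1/2 + p / (1 - p)

/-- canonical integrand -/
noncomputable def Fc (p : ℝ) (s d e : ℤ) (w : ℂ) : ℂ :=
  ((1 - p : ℂ) + p / w) ^ s * w ^ d * (w - 1) ^ e

/-- the integrand of the theorem -/
noncomputable def intg (p a : ℝ) (s d : ℤ) (n : ℕ) (w : ℂ) : ℂ :=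
  ((1 - p : ℂ) + p / w) ^ s * w ^ (d + n) /
    (w ^ 2 * (w - 1) ^ n * (1 / w + 1 / (a : ℂ) - 1))

namespace Good

set_option linter.unusedSectionVars false

variable {p r : ℝ} (h : Good p r)
include h

lemma hq : 0 < 1 - p := by linarith [h.hp1]

lemma rpos : (0:ℝ) < r := by linarith [h.hr1]

lemma pc_ne : (p : ℂ) ≠ 0 := by
  exact_mod_cast ne_of_gt h.hp0

lemma qc_ne : (1 : ℂ) - p ≠ 0 := by
  have : ((1 - p : ℝ) : ℂ) ≠ 0 := by exact_mod_cast ne_of_gt h.hq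
  push_cast at this
  exact this

lemma dist01 : dist (0:ℂ) (1/2) = 1/2 := by
  rw [Complex.dist_eq]
  norm_num

lemma dist11 : dist (1:ℂ) (1/2) = 1/2 := by
  rw [Complex.dist_eq]
  rw [show (1:ℂ) - 1/2 = 1/2 by ring]
  norm_num

lemma mem0 : (0:ℂ) ∈ ball (1/2 : ℂ) r := by
  rw [mem_ball, h.dist01]; exact h.hr1

lemma mem1 : (1:ℂ) ∈ ball (1/2 : ℂ) r := by
  rw [mem_ball, h.dist11]; exact h.hr1

lemma ne0 {w : ℂ} (hw : w ∈ sphere (1/2 : ℂ) r) : w ≠ 0 := by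
  rintro rfl
  rw [mem_sphere, h.dist01] at hw
  linarith [h.hr1]

lemma ne1 {w : ℂ} (hw : w ∈ sphere (1/2 : ℂ) r) : w - 1 ≠ 0 := by
  intro hc
  rw [sub_eq_zero] at hc
  subst hc
  rw [mem_sphere, h.dist11] at hw
  linarith [h.hr1]

lemma lin_ne {w : ℂ} (hw : w ∈ closedBall (1/2 : ℂ) r) : (1 - (p:ℂ)) * w + p ≠ 0 := by
  intro hc
  have hq' : (1:ℂ) - p ≠ 0 := h.qc_ne
  have hwval : w = ((-(p / (1 - p)) : ℝ) : ℂ) := by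
    push_cast
    field_simp
    linear_combination hc
  rw [mem_closedBall, Complex.dist_eq, hwval] at hw
  rw [show (((-(p / (1 - p)) : ℝ) : ℂ)) - 1/2 = (((-(p / (1 - p)) - 1/2 : ℝ)) : ℂ) by
    push_cast; ring] at hw
  rw [Complex.norm_real, Real.norm_eq_abs] at hw
  have hfrac : 0 ≤ p / (1 - p) := le_of_lt (div_pos h.hp0 h.hq)
  rw [abs_of_nonpos (by linarith)] at hw
  have := h.hr2
  linarith

lemma lin_ne' {w : ℂ} (hw : w ∈ sphere (1/2 : ℂ) r) : (1 - (p:ℂ)) * w + p ≠ 0 :=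
  h.lin_ne (sphere_subset_closedBall hw)

lemma base_eq {w : ℂ} (hw : w ∈ sphere (1/2 : ℂ) r) :
    (1 - (p:ℂ)) + p / w = ((1 - (p:ℂ)) * w + p) / w := by
  have hw0 := h.ne0 hw
  field_simp

lemma base_ne {w : ℂ} (hw : w ∈ sphere (1/2 : ℂ) r) : (1 - (p:ℂ)) + p / w ≠ 0 := by
  rw [h.base_eq hw]
  exact div_ne_zero (h.lin_ne' hw) (h.ne0 hw)

lemma contOn_Fc (s d e : ℤ) : ContinuousOn (Fc p s d e) (sphere (1/2 : ℂ) r) := by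
  unfold Fc
  have h1 : ContinuousOn (fun w : ℂ => ((1 - p : ℂ) + p / w) ^ s) (sphere (1/2 : ℂ) r) := by
    apply ContinuousOn.zpow₀
    · exact continuousOn_const.add (continuousOn_const.div continuousOn_id
        (fun w hw => h.ne0 hw))
    · exact fun w hw => Or.inl (h.base_ne hw)
  have h2 : ContinuousOn (fun w : ℂ => w ^ d) (sphere (1/2 : ℂ) r) := by
    apply ContinuousOn.zpow₀ continuousOn_id
    exact fun w hw => Or.inl (h.ne0 hw)
  have h3 : ContinuousOn (fun w : ℂ => (w - 1) ^ e) (sphere (1/2 : ℂ) r) := by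
    apply ContinuousOn.zpow₀ (continuousOn_id.sub continuousOn_const)
    exact fun w hw => Or.inl (h.ne1 hw)
  exact (h1.mul h2).mul h3

lemma ci_Fc (s d e : ℤ) : CircleIntegrable (Fc p s d e) (1/2) r :=
  (h.contOn_Fc s d e).circleIntegrable h.rpos.le

omit h in
lemma int_congr (hr : (1:ℝ)/2 < r) {f g : ℂ → ℂ}
    (hfg : ∀ w ∈ sphere (1/2 : ℂ) r, f w = g w) :
    (∮ w in C(1/2, r), f w) = ∮ w in C(1/2, r), g w :=
  circleIntegral.integral_congr (by linarith) hfg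

/-! pointwise multiplicative structure of `Fc` -/

omit h in
lemma Fc_d {s d e : ℤ} {w : ℂ} (hw0 : w ≠ 0) :
    Fc p s (d + 1) e w = Fc p s d e w * w := by
  unfold Fc
  rw [zpow_add_one₀ hw0]
  ring

omit h in
lemma Fc_e {s d e : ℤ} {w : ℂ} (hw1 : w - 1 ≠ 0) :
    Fc p s d (e + 1) w = Fc p s d e w * (w - 1) := by
  unfold Fc
  rw [zpow_add_one₀ hw1]
  ring

lemma Fc_s {s d e : ℤ} {w : ℂ} (hw : w ∈ sphere (1/2 : ℂ) r) :
    Fc p (s + 1) d e w = Fc p s d e w * ((1 - p : ℂ) + p / w) := by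
  unfold Fc
  rw [zpow_add_one₀ (h.base_ne hw)]
  ring

/-! elementary integrals -/

lemma int_w_zpow {n : ℤ} (hn : n ≠ -1) : (∮ w in C((1/2:ℂ), r), w ^ n) = 0 := by
  have := circleIntegral.integral_sub_zpow_of_ne hn (1/2 : ℂ) 0 r
  simpa using this

lemma int_e_zpow {n : ℤ} (hn : n ≠ -1) : (∮ w in C((1/2:ℂ), r), (w - 1) ^ n) = 0 :=
  circleIntegral.integral_sub_zpow_of_ne hn (1/2 : ℂ) 1 r

lemma int_w_inv : (∮ w in C((1/2:ℂ), r), w⁻¹) = 2 * Real.pi * I := by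
  have := circleIntegral.integral_sub_inv_of_mem_ball h.mem0
  simpa using this

lemma int_e_inv : (∮ w in C((1/2:ℂ), r), (w - 1)⁻¹) = 2 * Real.pi * I :=
  circleIntegral.integral_sub_inv_of_mem_ball h.mem1

lemma int_poly_div (k j : ℕ) :
    (∮ w in C((1/2:ℂ), r), w ^ k / ((1 - (p:ℂ)) * w + p) ^ j) = 0 := by
  have hdiff : ∀ z ∈ closedBall (1/2 : ℂ) r,
      DifferentiableAt ℂ (fun w : ℂ => w ^ k / ((1 - (p:ℂ)) * w + p) ^ j) z := by
    intro z hz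
    have h1 : DifferentiableAt ℂ (fun w : ℂ => w ^ k) z := differentiableAt_pow k
    have h2 : DifferentiableAt ℂ (fun w : ℂ => ((1 - (p:ℂ)) * w + p) ^ j) z :=
      ((differentiableAt_id.const_mul _).add_const _).pow j
    exact h1.div h2 (pow_ne_zero _ (h.lin_ne hz))
  exact Complex.circleIntegral_eq_zero_of_differentiable_on_off_countable h.rpos.le
    Set.countable_empty
    (fun z hz => (hdiff z hz).continuousAt.continuousWithinAt)
    (fun z hz => hdiff z (ball_subset_closedBall hz.1))

lemma int_lin_inv : (∮ w in C((1/2:ℂ), r), ((1 - (p:ℂ)) * w + p)⁻¹) = 0 := by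
  have := h.int_poly_div 0 1
  rw [int_congr h.hr1 (g := fun w => w ^ (0:ℕ) / ((1 - (p:ℂ)) * w + p) ^ (1:ℕ))]
  · exact this
  · intro w hw
    simp


/-! core integral identities -/

lemma coreH (s e E : ℤ) :
    (∮ w in C((1/2:ℂ), r), Fc p s (e + 1) E w) - (∮ w in C((1/2:ℂ), r), Fc p s e E w)
      = ∮ w in C((1/2:ℂ), r), Fc p s e (E + 1) w := by
  rw [← circleIntegral.integral_sub (h.ci_Fc s (e+1) E) (h.ci_Fc s e E)]
  apply int_congr h.hr1
  intro w hw
  rw [Fc_d (h.ne0 hw), Fc_e (h.ne1 hw)]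
  ring

lemma coreV (s e E : ℤ) :
    (∮ w in C((1/2:ℂ), r), Fc p s e E w) - (∮ w in C((1/2:ℂ), r), Fc p (s + 1) e E w)
      = (p:ℂ) * ∮ w in C((1/2:ℂ), r), Fc p s (e - 1) (E + 1) w := by
  rw [← circleIntegral.integral_const_mul,
    ← circleIntegral.integral_sub (h.ci_Fc s e E) (h.ci_Fc (s+1) e E)]
  apply int_congr h.hr1
  intro w hw
  have hw0 := h.ne0 hw
  have hd : Fc p s e E w = Fc p s (e - 1) E w * w := by
    have := Fc_d (p := p) (s := s) (d := e - 1) (e := E) hw0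
    rwa [sub_add_cancel] at this
  rw [h.Fc_s hw, Fc_e (h.ne1 hw), hd]
  field_simp
  ring

lemma coreX (s : ℤ) (d : ℤ) :
    (∮ w in C((1/2:ℂ), r), Fc p (s + 1) d 0 w)
      = (1 - (p:ℂ)) * (∮ w in C((1/2:ℂ), r), Fc p s d 0 w)
        + (p:ℂ) * ∮ w in C((1/2:ℂ), r), Fc p s (d - 1) 0 w := by
  have hsub : (∮ w in C((1/2:ℂ), r), Fc p (s + 1) d 0 w)
      - (1 - (p:ℂ)) * (∮ w in C((1/2:ℂ), r), Fc p s d 0 w)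
      = (p:ℂ) * ∮ w in C((1/2:ℂ), r), Fc p s (d - 1) 0 w := by
    rw [← circleIntegral.integral_const_mul, ← circleIntegral.integral_const_mul,
      ← circleIntegral.integral_sub (h.ci_Fc (s+1) d 0)]
    swap
    · exact (continuousOn_const.mul (h.contOn_Fc s d 0)).circleIntegrable h.rpos.le
    apply int_congr h.hr1
    intro w hw
    have hw0 := h.ne0 hw
    have hd : Fc p s d 0 w = Fc p s (d - 1) 0 w * w := by
      have := Fc_d (p := p) (s := s) (d := d - 1) (e := (0:ℤ)) hw0
      rwa [sub_add_cancel] at this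
    rw [h.Fc_s hw, hd]
    field_simp
    ring
  linear_combination hsub

/-! base values -/

lemma V1 : (∮ w in C((1/2:ℂ), r), Fc p 0 (-1) 0 w) = 2 * Real.pi * I := by
  rw [int_congr h.hr1 (g := fun w : ℂ => w⁻¹)]
  · exact h.int_w_inv
  · intro w hw
    unfold Fc
    simp [zpow_neg_one]

lemma V2 : (p:ℂ) * (∮ w in C((1/2:ℂ), r), Fc p (-1) (-2) 0 w) = 2 * Real.pi * I := by
  rw [← circleIntegral.integral_const_mul]
  rw [int_congr h.hr1 (g := fun w : ℂ => w⁻¹ - (1 - (p:ℂ)) * ((1 - (p:ℂ)) * w + p)⁻¹)]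
  · rw [circleIntegral.integral_sub]
    · rw [h.int_w_inv, circleIntegral.integral_const_mul, h.int_lin_inv]
      ring
    · exact (continuousOn_id.inv₀ (fun w hw => h.ne0 hw)).circleIntegrable h.rpos.le
    · refine (continuousOn_const.mul (ContinuousOn.inv₀ ?_ (fun w hw => h.lin_ne' hw))).circleIntegrable h.rpos.le
      exact (continuousOn_const.mul continuousOn_id).add continuousOn_const
  · intro w hw
    have hw0 := h.ne0 hw
    have hlin := h.lin_ne' hw
    unfold Fc
    rw [show ((-1:ℤ)) = -(1:ℤ) by rfl, zpow_neg, zpow_one, h.base_eq hw]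
    rw [show ((-2:ℤ)) = -(2:ℤ) by rfl, zpow_neg, show ((2:ℤ)) = ((2:ℕ):ℤ) by rfl, zpow_natCast]
    field_simp
    ring

lemma V3 : ∀ (s : ℕ) (d : ℤ), d ≤ -2 → (∮ w in C((1/2:ℂ), r), Fc p (s:ℤ) d 0 w) = 0 := by
  intro s
  induction s with
  | zero =>
    intro d hd
    rw [int_congr h.hr1 (g := fun w : ℂ => w ^ d)]
    · exact h.int_w_zpow (by omega)
    · intro w hw
      unfold Fc
      simp
  | succ k ih =>
    intro d hd
    rw [show ((k+1:ℕ):ℤ) = (k:ℤ) + 1 by push_cast; ring, h.coreX]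
    rw [ih d hd, ih (d-1) (by omega)]
    ring

lemma V4 (s d : ℤ) (hs : s ≤ 0) (hds : 0 ≤ d - s) : (∮ w in C((1/2:ℂ), r), Fc p s d 0 w) = 0 := by
  rw [int_congr h.hr1 (g := fun w : ℂ => w ^ (d - s).toNat / ((1 - (p:ℂ)) * w + p) ^ (-s).toNat)]
  · exact h.int_poly_div _ _
  · intro w hw
    have hw0 := h.ne0 hw
    have hlin := h.lin_ne' hw
    unfold Fc
    rw [h.base_eq hw, div_zpow, zpow_zero, mul_one]
    rw [show ((1 - (p:ℂ)) * w + p) ^ s = (((1 - (p:ℂ)) * w + p) ^ (-s).toNat)⁻¹ by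
      rw [← zpow_natCast _ (-s).toNat, Int.toNat_of_nonneg (by omega), zpow_neg, inv_inv]]
    rw [show (w:ℂ) ^ s = (w ^ (-s).toNat)⁻¹ by
      rw [← zpow_natCast _ (-s).toNat, Int.toNat_of_nonneg (by omega), zpow_neg, inv_inv]]
    rw [show (w:ℂ) ^ d = w ^ (d - s).toNat * (w ^ (-s).toNat)⁻¹ by
      rw [← zpow_natCast _ (d-s).toNat, ← zpow_natCast _ (-s).toNat,
        Int.toNat_of_nonneg hds, Int.toNat_of_nonneg (by omega), ← zpow_neg, neg_neg,
        ← zpow_add₀ hw0]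
      congr 1
      ring]
    field_simp

lemma E4 : ∀ (k e : ℕ), k ≤ e → (∮ w in C((1/2:ℂ), r), Fc p 0 (k:ℤ) (-(e:ℤ) - 2) w) = 0 := by
  intro k
  induction k with
  | zero =>
    intro e _
    rw [int_congr h.hr1 (g := fun w : ℂ => (w - 1) ^ (-(e:ℤ) - 2))]
    · exact h.int_e_zpow (by omega)
    · intro w hw
      unfold Fc
      simp
  | succ k ih =>
    intro e hke
    obtain ⟨e', rfl⟩ : ∃ e', e = e' + 1 := ⟨e - 1, by omega⟩
    have hc := h.coreH 0 (k:ℤ) (-((e' + 1 : ℕ):ℤ) - 2)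
    have h1 : (∮ w in C((1/2:ℂ), r), Fc p 0 ((k:ℤ)) (-((e'+1:ℕ):ℤ) - 2) w) = 0 :=
      ih _ (by omega)
    have h2 : (∮ w in C((1/2:ℂ), r), Fc p 0 ((k:ℤ)) (-((e'+1:ℕ):ℤ) - 2 + 1) w) = 0 := by
      rw [show (-((e'+1:ℕ):ℤ) - 2 + 1) = (-((e':ℕ):ℤ) - 2) by push_cast; ring]
      exact ih e' (by omega)
    rw [show ((k+1:ℕ):ℤ) = (k:ℤ) + 1 by push_cast; ring]
    linear_combination hc + h1 + h2

lemma V5 (n : ℕ) : (∮ w in C((1/2:ℂ), r), Fc p 0 ((n:ℤ) - 1) (-(n:ℤ) - 1) w) = 0 := by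
  cases n with
  | zero =>
    rw [show ((0:ℕ):ℤ) - 1 = (-1 : ℤ) by norm_num, show (-((0:ℕ):ℤ) - 1) = (-1 : ℤ) by norm_num]
    rw [int_congr h.hr1 (g := fun w : ℂ => (w - 1)⁻¹ - w⁻¹)]
    · rw [circleIntegral.integral_sub]
      · rw [h.int_e_inv, h.int_w_inv]; ring
      · exact ((continuousOn_id.sub continuousOn_const).inv₀
          (fun w hw => h.ne1 hw)).circleIntegrable h.rpos.le
      · exact (continuousOn_id.inv₀ (fun w hw => h.ne0 hw)).circleIntegrable h.rpos.le
    · intro w hw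
      have hw0 := h.ne0 hw
      have hw1 := h.ne1 hw
      unfold Fc
      rw [zpow_zero, show ((-1:ℤ)) = -(1:ℤ) by rfl, zpow_neg, zpow_one, zpow_neg, zpow_one]
      field_simp
      ring
  | succ k =>
    rw [show ((k+1:ℕ):ℤ) - 1 = ((k:ℕ):ℤ) by push_cast; ring,
      show (-((k+1:ℕ):ℤ) - 1) = (-((k:ℕ):ℤ) - 2) by push_cast; ring]
    exact h.E4 k k le_rfl

/-! relating `intg` to `Fc` -/

lemma intg_one_eq (s d : ℤ) (n : ℕ) {w : ℂ} (hw : w ∈ sphere (1/2 : ℂ) r) :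
    intg p 1 s d n w = Fc p s (d + n - 1) (-(n:ℤ)) w := by
  have hw0 := h.ne0 hw
  have hw1 := h.ne1 hw
  have hwn : ((w - 1):ℂ) ^ n ≠ 0 := pow_ne_zero _ hw1
  unfold intg Fc
  rw [Complex.ofReal_one]
  rw [show 1 / w + 1 / (1:ℂ) - 1 = w⁻¹ by ring]
  rw [show w ^ (d + (n:ℤ)) = w ^ (d + (n:ℤ) - 1) * w by
    rw [← zpow_add_one₀ hw0]; congr 1; ring]
  rw [show ((w - 1):ℂ) ^ (-(n:ℤ)) = ((w - 1) ^ (n:ℕ))⁻¹ by rw [zpow_neg, zpow_natCast]]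
  have hden : w ^ 2 * (w - 1) ^ n * w⁻¹ = (w - 1) ^ n * w := by
    have : w ^ 2 * (w - 1) ^ n * w⁻¹ = (w - 1) ^ n * w * (w * w⁻¹) := by ring
    rw [this, mul_inv_cancel₀ hw0, mul_one]
  rw [hden, show ((1 - (p:ℂ)) + p / w) ^ s * (w ^ (d + (n:ℤ) - 1) * w)
      = ((1 - (p:ℂ)) + p / w) ^ s * w ^ (d + (n:ℤ) - 1) * w by ring]
  rw [mul_div_mul_right _ _ hw0, div_eq_mul_inv]

lemma intg_p_eq (s d : ℤ) (n : ℕ) {w : ℂ} (hw : w ∈ sphere (1/2 : ℂ) r) :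
    intg p p s d n w = (p:ℂ) * Fc p (s - 1) (d + n - 2) (-(n:ℤ)) w := by
  have hw0 := h.ne0 hw
  have hw1 := h.ne1 hw
  have hwn : ((w - 1):ℂ) ^ n ≠ 0 := pow_ne_zero _ hw1
  have hx := h.base_ne hw
  have hpc := h.pc_ne
  unfold intg Fc
  rw [show 1 / w + 1 / (p:ℂ) - 1 = ((1 - (p:ℂ)) + p / w) / p by field_simp; ring]
  rw [show ((1 - (p:ℂ)) + p / w) ^ s
      = ((1 - (p:ℂ)) + p / w) ^ (s - 1) * ((1 - (p:ℂ)) + p / w) by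
    rw [← zpow_add_one₀ hx]; congr 1; ring]
  rw [show w ^ (d + (n:ℤ)) = w ^ (d + (n:ℤ) - 2) * w ^ (2:ℕ) by
    rw [← zpow_natCast w 2, ← zpow_add₀ hw0]; congr 1; ring]
  rw [show ((w - 1):ℂ) ^ (-(n:ℤ)) = ((w - 1) ^ (n:ℕ))⁻¹ by rw [zpow_neg, zpow_natCast]]
  have hden_ne : w ^ 2 * (w - 1) ^ n * (((1 - (p:ℂ)) + p / w) / p) ≠ 0 :=
    mul_ne_zero (mul_ne_zero (pow_ne_zero 2 hw0) hwn) (div_ne_zero hx hpc)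
  rw [div_eq_iff hden_ne]
  set x := (1 - (p:ℂ)) + p / w with hxdef
  field_simp

/-! the two difference identities, in integral form -/

lemma IDH {a : ℝ} (ha : a = 1 ∨ a = p) (s d : ℤ) (n : ℕ) :
    (∮ w in C((1/2:ℂ), r), intg p a s d (n+1) w)
      - (∮ w in C((1/2:ℂ), r), intg p a s (d-1) (n+1) w)
      = ∮ w in C((1/2:ℂ), r), intg p a s d n w := by
  rcases ha with rfl | ha'
  all_goals try rw [ha']
  · rw [int_congr h.hr1 (fun w hw => h.intg_one_eq s d (n+1) hw),
      int_congr h.hr1 (fun w hw => h.intg_one_eq s (d-1) (n+1) hw),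
      int_congr h.hr1 (fun w hw => h.intg_one_eq s d n hw)]
    rw [show (-((n:ℕ):ℤ)) = -((n:ℕ):ℤ) - 1 + 1 by ring]
    rw [show (-(((n+1:ℕ)):ℤ)) = -((n:ℕ):ℤ) - 1 by push_cast; ring]
    rw [show (d + ((n+1:ℕ):ℤ) - 1) = d + ((n:ℕ):ℤ) - 1 + 1 by push_cast; ring]
    rw [show (d - 1 + ((n+1:ℕ):ℤ) - 1) = d + ((n:ℕ):ℤ) - 1 by push_cast; ring]
    exact h.coreH s (d + (n:ℤ) - 1) (-(n:ℤ) - 1)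
  · rw [int_congr h.hr1 (fun w hw => h.intg_p_eq s d (n+1) hw),
      int_congr h.hr1 (fun w hw => h.intg_p_eq s (d-1) (n+1) hw),
      int_congr h.hr1 (fun w hw => h.intg_p_eq s d n hw)]
    rw [circleIntegral.integral_const_mul, circleIntegral.integral_const_mul,
      circleIntegral.integral_const_mul]
    rw [show (-((n:ℕ):ℤ)) = -((n:ℕ):ℤ) - 1 + 1 by ring]
    rw [show (-(((n+1:ℕ)):ℤ)) = -((n:ℕ):ℤ) - 1 by push_cast; ring]
    rw [show (d + ((n+1:ℕ):ℤ) - 2) = d + ((n:ℕ):ℤ) - 2 + 1 by push_cast; ring]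
    rw [show (d - 1 + ((n+1:ℕ):ℤ) - 2) = d + ((n:ℕ):ℤ) - 2 by push_cast; ring]
    have hc := h.coreH (s - 1) (d + (n:ℤ) - 2) (-(n:ℤ) - 1)
    linear_combination (p:ℂ) * hc

lemma IDV {a : ℝ} (ha : a = 1 ∨ a = p) (s d : ℤ) (n : ℕ) :
    (∮ w in C((1/2:ℂ), r), intg p a s d (n+1) w)
      - (∮ w in C((1/2:ℂ), r), intg p a (s+1) d (n+1) w)
      = (p:ℂ) * ∮ w in C((1/2:ℂ), r), intg p a s d n w := by
  rcases ha with rfl | ha'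
  all_goals try rw [ha']
  · rw [int_congr h.hr1 (fun w hw => h.intg_one_eq s d (n+1) hw),
      int_congr h.hr1 (fun w hw => h.intg_one_eq (s+1) d (n+1) hw),
      int_congr h.hr1 (fun w hw => h.intg_one_eq s d n hw)]
    rw [show (-((n:ℕ):ℤ)) = -((n:ℕ):ℤ) - 1 + 1 by ring]
    rw [show (-(((n+1:ℕ)):ℤ)) = -((n:ℕ):ℤ) - 1 by push_cast; ring]
    rw [show (d + ((n+1:ℕ):ℤ) - 1) = d + ((n:ℕ):ℤ) by push_cast; ring]
    have hc := h.coreV s (d + (n:ℤ)) (-(n:ℤ) - 1)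
    rw [show (d + (n:ℤ) - 1) = d + ((n:ℕ):ℤ) - 1 by ring] at hc
    exact hc
  · rw [int_congr h.hr1 (fun w hw => h.intg_p_eq s d (n+1) hw),
      int_congr h.hr1 (fun w hw => h.intg_p_eq (s+1) d (n+1) hw),
      int_congr h.hr1 (fun w hw => h.intg_p_eq s d n hw)]
    rw [circleIntegral.integral_const_mul, circleIntegral.integral_const_mul,
      circleIntegral.integral_const_mul]
    rw [show (s + 1 - 1 : ℤ) = (s - 1) + 1 by ring]
    rw [show (-((n:ℕ):ℤ)) = -((n:ℕ):ℤ) - 1 + 1 by ring]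
    rw [show (-(((n+1:ℕ)):ℤ)) = -((n:ℕ):ℤ) - 1 by push_cast; ring]
    rw [show (d + ((n+1:ℕ):ℤ) - 2) = d + ((n:ℕ):ℤ) - 1 by push_cast; ring]
    have hc := h.coreV (s - 1) (d + (n:ℤ) - 1) (-(n:ℤ) - 1)
    rw [show (d + (n:ℤ) - 1 - 1) = d + ((n:ℕ):ℤ) - 2 by ring] at hc
    linear_combination (p:ℂ) * hc

end Good

/-! boundary lemmas -/

lemma b_fst_le (B : Boundary) {σ τ : ℤ} (hστ : σ ≤ τ) : (B.b τ).1 ≤ (B.b σ).1 := by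
  refine Int.le_induction (motive := fun t _ => (B.b t).1 ≤ (B.b σ).1) ?_ ?_ τ hστ
  · exact le_refl _
  · intro k hk ih
    rcases B.step k with hs | hs <;> rw [hs] <;> simp [Prod.fst_add] <;> omega

lemma b_snd_le (B : Boundary) {σ τ : ℤ} (hστ : σ ≤ τ) : (B.b σ).2 ≤ (B.b τ).2 := by
  refine Int.le_induction (motive := fun t _ => (B.b σ).2 ≤ (B.b t).2) ?_ ?_ τ hστ
  · exact le_refl _
  · intro k hk ih
    rcases B.step k with hs | hs <;> rw [hs] <;> simp [Prod.snd_add] <;> omega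

lemma b_inv (B : Boundary) : ∀ τ : ℤ, (B.b τ).1 - (B.b τ).2 + τ = (B.b 0).1 - (B.b 0).2 := by
  intro τ
  induction τ using Int.induction_on with
  | zero => simp
  | succ k ih =>
    rcases B.step k with hs | hs <;> rw [hs] <;> simp [Prod.fst_add, Prod.snd_add] <;> omega
  | pred k ih =>
    have hs' := B.step (-(k:ℤ) - 1)
    rw [show (-(k:ℤ) - 1 + 1) = -(k:ℤ) by ring] at hs'
    rcases hs' with hs | hs <;> rw [hs] at ih <;>
      simp [Prod.fst_add, Prod.snd_add] at ih <;> omega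

lemma b_diff (B : Boundary) (σ τ : ℤ) :
    ((B.b σ).1 - (B.b τ).1) - ((B.b σ).2 - (B.b τ).2) = τ - σ := by
  have h1 := b_inv B σ
  have h2 := b_inv B τ
  omega

lemma ew_hor (p : ℝ) (B : Boundary) {τ : ℤ} (hs : B.b (τ+1) = B.b τ + (-1, 0)) :
    exitWeight p B τ = 1 := by
  unfold exitWeight
  rw [if_neg]
  intro hc
  rw [hs] at hc
  have := add_left_cancel hc
  simp [Prod.ext_iff] at this

lemma ew_ver (p : ℝ) (B : Boundary) {τ : ℤ} (hs : B.b (τ+1) = B.b τ + (0, 1)) :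
    exitWeight p B τ = p := by
  unfold exitWeight
  rw [if_pos hs]

/-! the convolution family and its recursion -/

noncomputable def Phi (p : ℝ) (B : Boundary) (τ₂ : ℤ) : ℕ → ℤ → ℝ
  | 0 => fun τ => if τ = τ₂ then 1 else 0
  | n+1 => fun τ => phiM p B n τ τ₂

lemma phiM_gt (p : ℝ) (B : Boundary) (n : ℕ) {τ τ₂ : ℤ} (hgt : τ₂ < τ) :
    phiM p B n τ τ₂ = 0 := by
  cases n with
  | zero =>
    show phiOne p B τ τ₂ = 0
    unfold phiOne
    rw [if_neg (by omega)]
  | succ k =>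
    show (∑ z ∈ Finset.Icc τ τ₂, phiOne p B τ z * phiM p B k z τ₂) = 0
    rw [Finset.Icc_eq_empty (by omega), Finset.sum_empty]

lemma Phi_rec (p : ℝ) (B : Boundary) (τ₂ : ℤ) (n : ℕ) (τ : ℤ) :
    Phi p B τ₂ (n+1) τ = exitWeight p B τ * Phi p B τ₂ n τ + Phi p B τ₂ (n+1) (τ+1) := by
  cases n with
  | zero =>
    show phiOne p B τ τ₂
      = exitWeight p B τ * (if τ = τ₂ then 1 else 0) + phiOne p B (τ+1) τ₂
    unfold phiOne
    rcases lt_trichotomy τ τ₂ with hlt | heq | hgt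
    · rw [if_pos (by omega), if_neg (by omega), if_pos (by omega)]
      ring
    · subst heq
      rw [if_pos le_rfl, if_pos rfl, if_neg (by omega)]
      ring
    · rw [if_neg (by omega), if_neg (by omega), if_neg (by omega)]
      ring
  | succ k =>
    show (∑ z ∈ Finset.Icc τ τ₂, phiOne p B τ z * phiM p B k z τ₂)
      = exitWeight p B τ * phiM p B k τ τ₂
        + ∑ z ∈ Finset.Icc (τ+1) τ₂, phiOne p B (τ+1) z * phiM p B k z τ₂
    by_cases hττ : τ ≤ τ₂
    · rw [show Finset.Icc τ τ₂ = insert τ (Finset.Icc (τ+1) τ₂) by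
        ext z; simp only [Finset.mem_Icc, Finset.mem_insert]; omega]
      rw [Finset.sum_insert (by simp only [Finset.mem_Icc]; omega)]
      congr 1
      · show phiOne p B τ τ * phiM p B k τ τ₂ = exitWeight p B τ * phiM p B k τ τ₂
        unfold phiOne
        rw [if_pos le_rfl]
      · apply Finset.sum_congr rfl
        intro z hz
        simp only [Finset.mem_Icc] at hz
        unfold phiOne
        rw [if_pos (by omega), if_pos (by omega)]
    · push_neg at hττ
      rw [Finset.Icc_eq_empty (by omega), Finset.Icc_eq_empty (by omega),
        Finset.sum_empty, Finset.sum_empty, phiM_gt p B k hττ]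
      ring

namespace Good

variable {p r : ℝ} (h : Good p r)
include h

set_option maxHeartbeats 1000000 in
lemma main (B : Boundary) (τ₂ : ℤ) :
    ∀ (n : ℕ) (τ : ℤ),
      (∮ w in C((1/2:ℂ), r), intg p (exitWeight p B τ₂) ((B.b τ).2 - (B.b τ₂).2)
          ((B.b τ).1 - (B.b τ₂).1) n w)
        = (2 * Real.pi * I) * (Phi p B τ₂ n τ : ℂ) := by
  have hew : exitWeight p B τ₂ = 1 ∨ exitWeight p B τ₂ = p := by
    rcases B.step τ₂ with hs | hs
    · exact Or.inl (ew_hor p B hs)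
    · exact Or.inr (ew_ver p B hs)
  intro n
  induction n with
  | zero =>
    intro τ
    have hPhi_eq : Phi p B τ₂ 0 τ = if τ = τ₂ then 1 else 0 := rfl
    rcases B.step τ₂ with hs | hs
    · -- horizontal step at τ₂ : a = 1
      have ha : exitWeight p B τ₂ = 1 := ew_hor p B hs
      rw [ha]
      rw [int_congr h.hr1 (fun w hw => h.intg_one_eq _ _ 0 hw)]
      rw [show ((B.b τ).1 - (B.b τ₂).1 + ((0:ℕ):ℤ) - 1)
          = (B.b τ).1 - (B.b τ₂).1 - 1 by push_cast; ring,
        show (-((0:ℕ):ℤ)) = (0:ℤ) by norm_num]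
      rcases lt_trichotomy τ τ₂ with hlt | heq | hgt
      · have hs2 : (B.b τ).2 - (B.b τ₂).2 ≤ 0 := by
          have := b_snd_le B hlt.le; omega
        have hdiff := b_diff B τ τ₂
        rw [h.V4 _ _ hs2 (by omega), hPhi_eq, if_neg (by omega)]
        norm_num
      · subst heq
        simp only [sub_self]
        rw [show ((0:ℤ) - 1) = (-1:ℤ) by norm_num, h.V1, hPhi_eq, if_pos rfl]
        norm_num
      · have hs2 : 0 ≤ (B.b τ).2 - (B.b τ₂).2 := by
          have := b_snd_le B hgt.le; omega
        have hx1 : (B.b τ).1 ≤ (B.b τ₂).1 - 1 := by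
          have h1 : (B.b τ).1 ≤ (B.b (τ₂+1)).1 := b_fst_le B (by omega)
          rw [hs] at h1
          simp only [Prod.fst_add] at h1
          omega
        have hV := h.V3 ((B.b τ).2 - (B.b τ₂).2).toNat ((B.b τ).1 - (B.b τ₂).1 - 1) (by omega)
        rw [Int.toNat_of_nonneg hs2] at hV
        rw [hV, hPhi_eq, if_neg (by omega)]
        norm_num
    · -- vertical step at τ₂ : a = p
      have ha : exitWeight p B τ₂ = p := ew_ver p B hs
      rw [ha]
      rw [int_congr h.hr1 (fun w hw => h.intg_p_eq _ _ 0 hw)]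
      rw [circleIntegral.integral_const_mul]
      rw [show ((B.b τ).1 - (B.b τ₂).1 + ((0:ℕ):ℤ) - 2)
          = (B.b τ).1 - (B.b τ₂).1 - 2 by push_cast; ring,
        show (-((0:ℕ):ℤ)) = (0:ℤ) by norm_num]
      rcases lt_trichotomy τ τ₂ with hlt | heq | hgt
      · have hs2 : (B.b τ).2 - (B.b τ₂).2 ≤ 0 := by
          have := b_snd_le B hlt.le; omega
        have hdiff := b_diff B τ τ₂
        rw [h.V4 _ _ (by omega : (B.b τ).2 - (B.b τ₂).2 - 1 ≤ 0) (by omega),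
          hPhi_eq, if_neg (by omega)]
        norm_num
      · subst heq
        simp only [sub_self]
        rw [show ((0:ℤ) - 1) = (-1:ℤ) by norm_num, show ((0:ℤ) - 2) = (-2:ℤ) by norm_num]
        rw [hPhi_eq, if_pos rfl, h.V2]
        norm_num
      · have hs2 : (B.b τ₂).2 + 1 ≤ (B.b τ).2 := by
          have h1 : (B.b (τ₂+1)).2 ≤ (B.b τ).2 := b_snd_le B (by omega)
          rw [hs] at h1
          simp only [Prod.snd_add] at h1
          omega
        have hx1 : (B.b τ).1 ≤ (B.b τ₂).1 := by
          have := b_fst_le B hgt.le; omega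
        have hV := h.V3 ((B.b τ).2 - (B.b τ₂).2 - 1).toNat
          ((B.b τ).1 - (B.b τ₂).1 - 2) (by omega)
        rw [Int.toNat_of_nonneg (by omega)] at hV
        rw [hV, hPhi_eq, if_neg (by omega)]
        norm_num
  | succ n ihn =>
    intro τ
    refine Int.inductionOn' τ (τ₂ + 1) ?_ ?_ ?_
    · -- base point τ₂ + 1
      have hPhi : Phi p B τ₂ (n+1) (τ₂+1) = 0 := phiM_gt p B n (by omega)
      rw [hPhi]
      rcases B.step τ₂ with hs | hs
      · have ha : exitWeight p B τ₂ = 1 := ew_hor p B hs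
        have e1 : (B.b (τ₂+1)).1 - (B.b τ₂).1 = -1 := by
          rw [hs]; simp [Prod.fst_add]
        have e2 : (B.b (τ₂+1)).2 - (B.b τ₂).2 = 0 := by
          rw [hs]; simp [Prod.snd_add]
        rw [ha, e1, e2]
        rw [int_congr h.hr1 (fun w hw => h.intg_one_eq 0 (-1) (n+1) hw)]
        rw [show ((-1:ℤ) + ((n+1:ℕ):ℤ) - 1) = ((n:ℕ):ℤ) - 1 by push_cast; ring,
          show (-((n+1:ℕ):ℤ)) = -((n:ℕ):ℤ) - 1 by push_cast; ring]
        rw [h.V5 n]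
        norm_num
      · have ha : exitWeight p B τ₂ = p := ew_ver p B hs
        have e1 : (B.b (τ₂+1)).1 - (B.b τ₂).1 = 0 := by
          rw [hs]; simp [Prod.fst_add]
        have e2 : (B.b (τ₂+1)).2 - (B.b τ₂).2 = 1 := by
          rw [hs]; simp [Prod.snd_add]
        rw [ha, e1, e2]
        rw [int_congr h.hr1 (fun w hw => h.intg_p_eq 1 0 (n+1) hw)]
        rw [circleIntegral.integral_const_mul]
        rw [show ((1:ℤ) - 1) = (0:ℤ) by norm_num,
          show ((0:ℤ) + ((n+1:ℕ):ℤ) - 2) = ((n:ℕ):ℤ) - 1 by push_cast; ring,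
          show (-((n+1:ℕ):ℤ)) = -((n:ℕ):ℤ) - 1 by push_cast; ring]
        rw [h.V5 n]
        norm_num
    · -- upward step
      intro k hk ihk
      have hrec := Phi_rec p B τ₂ n k
      have hrecC : (Phi p B τ₂ (n+1) (k+1) : ℂ)
          = (Phi p B τ₂ (n+1) k : ℂ)
            - (exitWeight p B k : ℂ) * (Phi p B τ₂ n k : ℂ) := by
        have : Phi p B τ₂ (n+1) (k+1)
            = Phi p B τ₂ (n+1) k - exitWeight p B k * Phi p B τ₂ n k := by linarith
        exact_mod_cast congrArg (fun x : ℝ => (x : ℂ)) this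
      rcases B.step k with hs | hs
      · have hwk : exitWeight p B k = 1 := ew_hor p B hs
        have e1 : (B.b (k+1)).1 - (B.b τ₂).1 = ((B.b k).1 - (B.b τ₂).1) - 1 := by
          rw [hs]; simp [Prod.fst_add]; ring
        have e2 : (B.b (k+1)).2 - (B.b τ₂).2 = (B.b k).2 - (B.b τ₂).2 := by
          rw [hs]; simp [Prod.snd_add]
        rw [e1, e2]
        have hid := h.IDH hew ((B.b k).2 - (B.b τ₂).2) ((B.b k).1 - (B.b τ₂).1) n
        have hn' := ihn k
        rw [hwk] at hrecC
        norm_num at hrecC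
        linear_combination ihk - hid - hn' - (2*(Real.pi:ℂ)*I) * hrecC
      · have hwk : exitWeight p B k = p := ew_ver p B hs
        have e1 : (B.b (k+1)).1 - (B.b τ₂).1 = (B.b k).1 - (B.b τ₂).1 := by
          rw [hs]; simp [Prod.fst_add]
        have e2 : (B.b (k+1)).2 - (B.b τ₂).2 = ((B.b k).2 - (B.b τ₂).2) + 1 := by
          rw [hs]; simp [Prod.snd_add]; ring
        rw [e1, e2]
        have hid := h.IDV hew ((B.b k).2 - (B.b τ₂).2) ((B.b k).1 - (B.b τ₂).1) n
        have hn' := ihn k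
        rw [hwk] at hrecC
        linear_combination ihk - hid - (p:ℂ) * hn' - (2*(Real.pi:ℂ)*I) * hrecC
    · -- downward step
      intro k hk ihk
      have hs0 := B.step (k-1)
      have hrec := Phi_rec p B τ₂ n (k-1)
      rw [show (k - 1 + 1 : ℤ) = k by ring] at hrec
      have hrecC : (Phi p B τ₂ (n+1) (k-1) : ℂ)
          = (exitWeight p B (k-1) : ℂ) * (Phi p B τ₂ n (k-1) : ℂ)
            + (Phi p B τ₂ (n+1) k : ℂ) := by
        exact_mod_cast congrArg (fun x : ℝ => (x : ℂ)) hrec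
      rcases hs0 with hs | hs
      · have hwk : exitWeight p B (k-1) = 1 := ew_hor p B hs
        rw [show (k - 1 + 1 : ℤ) = k by ring] at hs
        have e1 : (B.b k).1 - (B.b τ₂).1 = ((B.b (k-1)).1 - (B.b τ₂).1) - 1 := by
          rw [hs]; simp [Prod.fst_add]; ring
        have e2 : (B.b k).2 - (B.b τ₂).2 = (B.b (k-1)).2 - (B.b τ₂).2 := by
          rw [hs]; simp [Prod.snd_add]
        rw [e1, e2] at ihk
        have hid := h.IDH hew ((B.b (k-1)).2 - (B.b τ₂).2) ((B.b (k-1)).1 - (B.b τ₂).1) n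
        have hn' := ihn (k-1)
        rw [hwk] at hrecC
        push_cast at hrecC
        linear_combination hid + ihk + hn' - (2*(Real.pi:ℂ)*I) * hrecC
      · have hwk : exitWeight p B (k-1) = p := ew_ver p B hs
        rw [show (k - 1 + 1 : ℤ) = k by ring] at hs
        have e1 : (B.b k).1 - (B.b τ₂).1 = (B.b (k-1)).1 - (B.b τ₂).1 := by
          rw [hs]; simp [Prod.fst_add]
        have e2 : (B.b k).2 - (B.b τ₂).2 = ((B.b (k-1)).2 - (B.b τ₂).2) + 1 := by
          rw [hs]; simp [Prod.snd_add]; ring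
        rw [e1, e2] at ihk
        have hid := h.IDV hew ((B.b (k-1)).2 - (B.b τ₂).2) ((B.b (k-1)).1 - (B.b τ₂).1) n
        have hn' := ihn (k-1)
        rw [hwk] at hrecC
        linear_combination hid + ihk + (p:ℂ) * hn' - (2*(Real.pi:ℂ)*I) * hrecC

end Good

end SAux



/-- integral representation of the `m`-fold convolution `φ^{(m)}`, `m ≥ 1`
(here `φ^{(m)} = phiM p B (m-1)`, i.e. the claim is stated for `phiM p B m = φ^{(m+1)}`). -/
theorem phiM_integral_representation (p : ℝ) (hp0 : 0 < p) (hp1 : p < 1)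
    (B : Boundary) (m : ℕ) (τ₁ τ₂ : ℤ)
    (r : ℝ) (hr1 : 1/2 < r) (hr2 : r < 1/2 + p / (1 - p)) :
    (phiM p B m τ₁ τ₂ : ℂ) =
      (2 * Real.pi * Complex.I)⁻¹ *
        ∮ w in C(1/2, r),
          ((1 - p : ℂ) + p / w) ^ ((B.b τ₁).2 - (B.b τ₂).2) *
              w ^ ((B.b τ₁).1 - (B.b τ₂).1 + (m + 1 : ℤ)) /
            (w ^ 2 * (w - 1) ^ (m + 1) * (1 / w + 1 / (exitWeight p B τ₂ : ℂ) - 1)) := by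
  have h : SAux.Good p r := ⟨hp0, hp1, hr1, hr2⟩
  have hM := h.main B τ₂ (m+1) τ₁
  have hint : (∮ w in C((1/2:ℂ), r),
      SAux.intg p (exitWeight p B τ₂) ((B.b τ₁).2 - (B.b τ₂).2)
        ((B.b τ₁).1 - (B.b τ₂).1) (m+1) w)
      = ∮ w in C((1/2:ℂ), r),
          ((1 - p : ℂ) + p / w) ^ ((B.b τ₁).2 - (B.b τ₂).2) *
              w ^ ((B.b τ₁).1 - (B.b τ₂).1 + (m + 1 : ℤ)) /
            (w ^ 2 * (w - 1) ^ (m + 1) * (1 / w + 1 / (exitWeight p B τ₂ : ℂ) - 1)) := by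
    apply SAux.Good.int_congr hr1
    intro w hw
    unfold SAux.intg
    norm_cast
  rw [← hint, hM]
  have hPhi : SAux.Phi p B τ₂ (m+1) τ₁ = phiM p B m τ₁ τ₂ := rfl
  rw [hPhi]
  have hne : (2 * (Real.pi:ℂ) * Complex.I) ≠ 0 :=
    mul_ne_zero (mul_ne_zero two_ne_zero (Complex.ofReal_ne_zero.2 Real.pi_ne_zero))
      Complex.I_ne_zero
  rw [inv_mul_cancel_left₀ hne]
end

section
/- Let 0 < p < 1, q = 1 − p. Fix integers n₁, n₂ ≥ 1, x₁, x₂ ∈ ℤ, t₁ ≥ 0, t₂ ∈ ℤ, let π₂ ∈ {1, p}, and fix radii ρ, R with 0 < ρ < 1, R > 1 + ρ and Rρ < (R−1)(1−ρ). Define Ψ^{n}_{k}(x,t) = (2πi)^{−1} ∮_{|w|=R} (q + p/w)^{t} ((w−1)/w)^{k} w^{x+n−2} dw and Φ^{n}_{j}(x,t) = (2πi)^{−1} ∮_{|v−1|=ρ} (q + p/v)^{−t} (v−1)^{−j−1} v^{j−x−n} / ((1/π₂ − 1)v + 1) dv. Then the series ∑_{k=1}^{∞} Ψ^{n₁}_{n₁−k}(x₁,t₁)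 · Φ^{n₂}_{n₂−k}(x₂,t₂) converges, and its sum equals the double contour integral (2πi)^{−2} ∮_{|v−1|=ρ} (dv/v) ∮_{|w|=R} (dw/w) (q + p/w)^{t₁} (q + p/v)^{−t₂} (w−1)^{n₁} (v−1)^{−n₂} w^{x₁} v^{−x₂} / ( (w − v) (1/v + 1/π₂ − 1) ). -/
open Complex

/-- `Ψ^n_k(x,t)`: contour integral over the circle `|w| = R`. -/
noncomputable def Psi2 (p R : ℝ) (n k x t : ℤ) : ℂ :=
  (2 * Real.pi * Complex.I)⁻¹ *
    ∮ w in C(0, R), ((1 - p : ℂ) + p / w) ^ t * ((w - 1) / w) ^ k * w ^ (x + n - 2)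

/-- `Φ^n_j(x,t)`: contour integral over the circle `|v − 1| = ρ`. -/
noncomputable def Phi2 (p ρ π₂ : ℝ) (n j x t : ℤ) : ℂ :=
  (2 * Real.pi * Complex.I)⁻¹ *
    ∮ v in C(1, ρ),
      ((1 - p : ℂ) + p / v) ^ (-t) * (v - 1) ^ (-j - 1) * v ^ (j - x - n) /
        (((1 / π₂ - 1 : ℝ) : ℂ) * v + 1)

noncomputable def psiF (p : ℝ) (n₁ x₁ t₁ : ℤ) (k : ℕ) (w : ℂ) : ℂ :=
  ((1 - p : ℂ) + p / w) ^ t₁ * ((w - 1) / w) ^ (n₁ - ((k : ℤ) + 1)) * w ^ (x₁ + n₁ - 2)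

noncomputable def phiF (p π₂ : ℝ) (n₂ x₂ t₂ : ℤ) (k : ℕ) (v : ℂ) : ℂ :=
  ((1 - p : ℂ) + p / v) ^ (-t₂) * (v - 1) ^ (-(n₂ - ((k : ℤ) + 1)) - 1) *
      v ^ ((n₂ - ((k : ℤ) + 1)) - x₂ - n₂) / (((1 / π₂ - 1 : ℝ) : ℂ) * v + 1)

lemma factorFP (p π₂ : ℝ) (n₁ n₂ x₁ x₂ t₁ t₂ : ℤ) (w v : ℂ)
    (hw0 : w ≠ 0) (hw1 : w - 1 ≠ 0) (hv0 : v ≠ 0) (hv1 : v - 1 ≠ 0) (k : ℕ) :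
    phiF p π₂ n₂ x₂ t₂ k v * psiF p n₁ x₁ t₁ k w =
      (phiF p π₂ n₂ x₂ t₂ 0 v * psiF p n₁ x₁ t₁ 0 w) * (w * (v - 1) / ((w - 1) * v)) ^ k := by
  have ha : (w - 1) / w ≠ 0 := div_ne_zero hw1 hw0
  simp only [phiF, psiF]
  have e1 : n₁ - ((k : ℤ) + 1) = (n₁ - ((0:ℕ) + 1)) + (-(k:ℤ)) := by push_cast; ring
  have e2 : -(n₂ - ((k : ℤ) + 1)) - 1 = (-(n₂ - ((0:ℕ) + 1)) - 1) + (k:ℤ) := by push_cast; ring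
  have e3 : (n₂ - ((k : ℤ) + 1)) - x₂ - n₂ = ((n₂ - ((0:ℕ) + 1)) - x₂ - n₂) + (-(k:ℤ)) := by
    push_cast; ring
  rw [e1, e2, e3, zpow_add₀ ha, zpow_add₀ hv1, zpow_add₀ hv0]
  simp only [zpow_neg, zpow_natCast]
  have hpow : (w * (v - 1) / ((w - 1) * v)) ^ k =
      (((w - 1) / w) ^ k)⁻¹ * ((v - 1) ^ k * (v ^ k)⁻¹) := by
    rw [← inv_pow, ← inv_pow, inv_div, ← mul_pow, ← mul_pow]
    congr 1
    field_simp
  rw [hpow]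
  ring

noncomputable def gF (p π₂ : ℝ) (n₁ n₂ x₁ x₂ t₁ t₂ : ℤ) (v w : ℂ) : ℂ :=
  v⁻¹ * (w⁻¹ *
    (((1 - p : ℂ) + p / w) ^ t₁ * ((1 - p : ℂ) + p / v) ^ (-t₂) *
        (w - 1) ^ n₁ * (v - 1) ^ (-n₂) * w ^ x₁ * v ^ (-x₂) /
      ((w - v) * (1 / v + 1 / (π₂ : ℂ) - 1))))

set_option maxHeartbeats 1600000 in
lemma sum_valueFP (p π₂ : ℝ) (hπ₂0 : (π₂ : ℂ) ≠ 0) (n₁ n₂ x₁ x₂ t₁ t₂ : ℤ) (w v : ℂ)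
    (hw0 : w ≠ 0) (hw1 : w - 1 ≠ 0) (hv0 : v ≠ 0) (hv1 : v - 1 ≠ 0) (hwv : w - v ≠ 0)
    (hAv : (1 - p : ℂ) + p / v ≠ 0) (hD : ((1 / π₂ - 1 : ℝ) : ℂ) * v + 1 ≠ 0) :
    (phiF p π₂ n₂ x₂ t₂ 0 v * psiF p n₁ x₁ t₁ 0 w) * (1 - w * (v - 1) / ((w - 1) * v))⁻¹ =
      gF p π₂ n₁ n₂ x₁ x₂ t₁ t₂ v w := by
  have hcast : ((1 / π₂ - 1 : ℝ) : ℂ) = 1 / (π₂ : ℂ) - 1 := by push_cast; ring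
  have hDv : ((1 / π₂ - 1 : ℝ) : ℂ) * v + 1 = v * (1 / v + 1 / (π₂ : ℂ) - 1) := by
    rw [hcast]; field_simp; ring
  have hS : (1 / v + 1 / (π₂ : ℂ) - 1) ≠ 0 := by
    intro h; apply hD; rw [hDv, h, mul_zero]
  have h1r : (1 - w * (v - 1) / ((w - 1) * v))⁻¹ = (w - 1) * v / (w - v) := by
    rw [show 1 - w * (v - 1) / ((w - 1) * v) = (w - v) / ((w - 1) * v) by
      field_simp; ring, inv_div]
  simp only [phiF, psiF, gF, Nat.cast_zero, zero_add]
  have a1 : ((w - 1) / w) ^ (n₁ - 1) = (w - 1) ^ n₁ / (w - 1) / (w ^ n₁ / w) := by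
    rw [div_zpow, zpow_sub₀ hw1, zpow_sub₀ hw0, zpow_one, zpow_one]
  have a2 : w ^ (x₁ + n₁ - 2) = w ^ x₁ * w ^ n₁ / (w * w) := by
    rw [zpow_sub₀ hw0, zpow_add₀ hw0]; norm_num [zpow_two]; ring
  have a3 : v ^ (n₂ - 1 - x₂ - n₂) = v ^ (-x₂) / v := by
    rw [show n₂ - 1 - x₂ - n₂ = -x₂ - 1 by ring, zpow_sub₀ hv0, zpow_one]
  have a4 : (v - 1) ^ (-(n₂ - 1) - 1) = (v - 1) ^ (-n₂) := by
    rw [show -(n₂ - 1) - 1 = -n₂ by ring]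
  have hwn : w ^ n₁ ≠ 0 := zpow_ne_zero _ hw0
  have hwx : w ^ x₁ ≠ 0 := zpow_ne_zero _ hw0
  have hvx : v ^ (-x₂) ≠ 0 := zpow_ne_zero _ hv0
  have hw1n : (w - 1) ^ n₁ ≠ 0 := zpow_ne_zero _ hw1
  have hv1n : (v - 1) ^ (-n₂) ≠ 0 := zpow_ne_zero _ hv1
  have hAvn : ((1 - p : ℂ) + p / v) ^ (-t₂) ≠ 0 := zpow_ne_zero _ hAv
  rw [h1r, a1, a2, a3, a4, hDv]
  generalize hg3 : w ^ n₁ = X3 at hwn ⊢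
  generalize hgS : 1 / v + 1 / (π₂ : ℂ) - 1 = S at hS ⊢
  generalize hgu : w - 1 = u at hw1 ⊢
  generalize hgd : w - v = d at hwv ⊢
  generalize (1 - (p : ℂ) + ↑p / w) ^ t₁ = X7
  generalize (1 - (p : ℂ) + ↑p / v) ^ (-t₂) = X6
  generalize (v - 1) ^ (-n₂) = X5
  generalize w ^ x₁ = X2
  generalize v ^ (-x₂) = X4
  generalize u ^ n₁ = X1
  field_simp

lemma point_factsFP (p : ℝ) (hp0 : 0 < p) (hp1 : p < 1) (ρ R : ℝ)
    (hρ0 : 0 < ρ) (hρ1 : ρ < 1) (hR : 1 + ρ < R) (w v : ℂ)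
    (hw : ‖w‖ = R) (hv : ‖v - 1‖ = ρ) :
    w ≠ 0 ∧ w - 1 ≠ 0 ∧ v ≠ 0 ∧ v - 1 ≠ 0 ∧ w - v ≠ 0 ∧
      ((1 - p : ℂ) + p / v ≠ 0) ∧ (R - 1 ≤ ‖w - 1‖) ∧ (1 - ρ ≤ ‖v‖) := by
  have hR0 : (0:ℝ) < R := by linarith
  have hw0 : w ≠ 0 := by
    intro h; rw [h, norm_zero] at hw; linarith
  have hw1' : R - 1 ≤ ‖w - 1‖ := by
    have h := norm_sub_norm_le w 1
    rw [hw, norm_one] at h; linarith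
  have hw1 : w - 1 ≠ 0 := by
    intro h; rw [h, norm_zero] at hw1'; linarith
  have hv1 : v - 1 ≠ 0 := by
    intro h; rw [h, norm_zero] at hv; linarith
  have hvlb : 1 - ρ ≤ ‖v‖ := by
    have h := norm_sub_norm_le (1:ℂ) (1 - v)
    rw [norm_one, sub_sub_cancel, norm_sub_rev, hv] at h; linarith
  have hvub : ‖v‖ ≤ 1 + ρ := by
    have h := norm_add_le (1:ℂ) (v - 1)
    rw [norm_one, hv] at h
    calc ‖v‖ = ‖1 + (v - 1)‖ := by ring_nf
    _ ≤ 1 + ρ := h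
  have hv0 : v ≠ 0 := by
    intro h; rw [h, norm_zero] at hvlb; linarith
  have hwv : w - v ≠ 0 := by
    intro h
    have hev : w = v := sub_eq_zero.mp h
    rw [hev] at hw
    linarith
  have hAv : (1 - p : ℂ) + p / v ≠ 0 := by
    intro h
    have h2 : ((1:ℂ) - p) * v + p = 0 := by
      field_simp at h
      linear_combination h
    have h3 : ((1 - p : ℝ) : ℂ) * (v - 1) = -1 := by push_cast; linear_combination h2
    have h4 := congrArg norm h3
    rw [norm_mul, Complex.norm_real, hv, Real.norm_eq_abs, abs_of_pos (by linarith : (0:ℝ) < 1 - p)] at h4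
    simp only [norm_neg, norm_one] at h4
    nlinarith
  exact ⟨hw0, hw1, hv0, hv1, hwv, hAv, hw1', hvlb⟩

lemma hD_neFP (p : ℝ) (hp0 : 0 < p) (hp1 : p < 1) (π₂ : ℝ) (hπ₂ : π₂ = 1 ∨ π₂ = p)
    (ρ : ℝ) (hρ0 : 0 < ρ) (hρ1 : ρ < 1) (v : ℂ) (hv : ‖v - 1‖ = ρ) (hv0 : v ≠ 0) :
    ((1 / π₂ - 1 : ℝ) : ℂ) * v + 1 ≠ 0 := by
  rcases hπ₂ with h | h
  · rw [h]; norm_num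
  · rw [h]
    intro hD
    have hpc : (p : ℂ) ≠ 0 := by
      simpa using (Complex.ofReal_ne_zero.mpr hp0.ne')
    have h2 : ((1:ℂ) - p) * v + p = 0 := by
      push_cast at hD
      field_simp at hD
      linear_combination hD
    have h3 : ((1 - p : ℝ) : ℂ) * (v - 1) = -1 := by push_cast; linear_combination h2
    have h4 := congrArg norm h3
    rw [norm_mul, Complex.norm_real, hv, Real.norm_eq_abs,
      abs_of_pos (by linarith : (0:ℝ) < 1 - p)] at h4
    simp only [norm_neg, norm_one] at h4
    nlinarith

lemma hasSum_pointFP (p π₂ : ℝ) (hp0 : 0 < p) (hp1 : p < 1) (hπ₂ : π₂ = 1 ∨ π₂ = p)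
    (n₁ n₂ x₁ x₂ t₁ t₂ : ℤ) (ρ R : ℝ) (hρ0 : 0 < ρ) (hρ1 : ρ < 1) (hR : 1 + ρ < R)
    (hRρ : R * ρ < (R - 1) * (1 - ρ)) (w v : ℂ) (hw : ‖w‖ = R) (hv : ‖v - 1‖ = ρ) :
    HasSum (fun k : ℕ => phiF p π₂ n₂ x₂ t₂ k v * psiF p n₁ x₁ t₁ k w)
        (gF p π₂ n₁ n₂ x₁ x₂ t₁ t₂ v w) ∧
      ∀ k : ℕ, ‖phiF p π₂ n₂ x₂ t₂ k v * psiF p n₁ x₁ t₁ k w‖ ≤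
        ‖phiF p π₂ n₂ x₂ t₂ 0 v * psiF p n₁ x₁ t₁ 0 w‖ * (R * ρ / ((R - 1) * (1 - ρ))) ^ k := by
  obtain ⟨hw0, hw1, hv0, hv1, hwv, hAv, hw1', hvlb⟩ :=
    point_factsFP p hp0 hp1 ρ R hρ0 hρ1 hR w v hw hv
  have hD := hD_neFP p hp0 hp1 π₂ hπ₂ ρ hρ0 hρ1 v hv hv0
  have hπ₂0 : (π₂ : ℂ) ≠ 0 := by
    rcases hπ₂ with h | h
    · rw [h]; norm_num
    · rw [h]; exact Complex.ofReal_ne_zero.mpr hp0.ne'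
  have hden : 0 < (R - 1) * (1 - ρ) := by nlinarith
  have hR0 : (0:ℝ) < R := by linarith
  have hrle : ‖w * (v - 1) / ((w - 1) * v)‖ ≤ R * ρ / ((R - 1) * (1 - ρ)) := by
    rw [norm_div, norm_mul, norm_mul, hw, hv]
    exact div_le_div_of_nonneg_left (by positivity) hden
      (mul_le_mul hw1' hvlb (by linarith) (norm_nonneg _))
  have hrlt : ‖w * (v - 1) / ((w - 1) * v)‖ < 1 :=
    hrle.trans_lt ((div_lt_one hden).mpr hRρ)
  have heq : (fun k : ℕ => phiF p π₂ n₂ x₂ t₂ k v * psiF p n₁ x₁ t₁ k w) =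
      fun k : ℕ => (phiF p π₂ n₂ x₂ t₂ 0 v * psiF p n₁ x₁ t₁ 0 w) *
        (w * (v - 1) / ((w - 1) * v)) ^ k :=
    funext (factorFP p π₂ n₁ n₂ x₁ x₂ t₁ t₂ w v hw0 hw1 hv0 hv1)
  constructor
  · rw [heq, ← sum_valueFP p π₂ hπ₂0 n₁ n₂ x₁ x₂ t₁ t₂ w v hw0 hw1 hv0 hv1 hwv hAv hD]
    exact (hasSum_geometric_of_norm_lt_one hrlt).mul_left _
  · intro k
    rw [factorFP p π₂ n₁ n₂ x₁ x₂ t₁ t₂ w v hw0 hw1 hv0 hv1 k, norm_mul, norm_pow]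
    exact mul_le_mul_of_nonneg_left (pow_le_pow_left₀ (norm_nonneg _) hrle k) (norm_nonneg _)

lemma contPsiFP (p : ℝ) (n₁ x₁ t₁ : ℤ) (ht₁ : 0 ≤ t₁) (k : ℕ) {w : ℂ}
    (hw0 : w ≠ 0) (hw1 : w - 1 ≠ 0) : ContinuousAt (psiF p n₁ x₁ t₁ k) w := by
  unfold psiF
  have h1 : ContinuousAt (fun w : ℂ => (1 - p : ℂ) + p / w) w :=
    continuousAt_const.add (continuousAt_const.div continuousAt_id hw0)
  have h2 : ContinuousAt (fun w : ℂ => (w - 1) / w) w :=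
    (continuousAt_id.sub continuousAt_const).div continuousAt_id hw0
  exact ((h1.zpow₀ t₁ (Or.inr ht₁)).mul
      (h2.zpow₀ _ (Or.inl (div_ne_zero hw1 hw0)))).mul
    (continuousAt_id.zpow₀ _ (Or.inl hw0))

lemma contPhiFP (p π₂ : ℝ) (n₂ x₂ t₂ : ℤ) (k : ℕ) {v : ℂ}
    (hv0 : v ≠ 0) (hv1 : v - 1 ≠ 0) (hAv : (1 - p : ℂ) + p / v ≠ 0)
    (hD : ((1 / π₂ - 1 : ℝ) : ℂ) * v + 1 ≠ 0) :
    ContinuousAt (phiF p π₂ n₂ x₂ t₂ k) v := by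
  unfold phiF
  have h1 : ContinuousAt (fun v : ℂ => (1 - p : ℂ) + p / v) v :=
    continuousAt_const.add (continuousAt_const.div continuousAt_id hv0)
  have h2 : ContinuousAt (fun v : ℂ => v - 1) v := continuousAt_id.sub continuousAt_const
  have h3 : ContinuousAt (fun v : ℂ => ((1 / π₂ - 1 : ℝ) : ℂ) * v + 1) v :=
    (continuousAt_const.mul continuousAt_id).add continuousAt_const
  exact (((h1.zpow₀ _ (Or.inl hAv)).mul (h2.zpow₀ _ (Or.inl hv1))).mul
    (continuousAt_id.zpow₀ _ (Or.inl hv0))).div h3 hD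
/-- the series `∑_{k=1}^{∞} Ψ^{n₁}_{n₁−k}(x₁,t₁)·Φ^{n₂}_{n₂−k}(x₂,t₂)`
converges and its sum equals the double contour integral part of the kernel. -/
theorem kernel_double_integral (p : ℝ) (hp0 : 0 < p) (hp1 : p < 1)
    (n₁ n₂ : ℤ) (hn₁ : 1 ≤ n₁) (hn₂ : 1 ≤ n₂)
    (x₁ x₂ t₁ t₂ : ℤ) (ht₁ : 0 ≤ t₁)
    (π₂ : ℝ) (hπ₂ : π₂ = 1 ∨ π₂ = p)
    (ρ R : ℝ) (hρ0 : 0 < ρ) (hρ1 : ρ < 1) (hR : 1 + ρ < R)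
    (hRρ : R * ρ < (R - 1) * (1 - ρ)) :
    HasSum
      (fun k : ℕ =>
        Psi2 p R n₁ (n₁ - (k + 1)) x₁ t₁ * Phi2 p ρ π₂ n₂ (n₂ - (k + 1)) x₂ t₂)
      (((2 * Real.pi * Complex.I) ^ 2)⁻¹ *
        ∮ v in C(1, ρ), v⁻¹ *
          ∮ w in C(0, R), w⁻¹ *
            (((1 - p : ℂ) + p / w) ^ t₁ * ((1 - p : ℂ) + p / v) ^ (-t₂) *
                (w - 1) ^ n₁ * (v - 1) ^ (-n₂) * w ^ x₁ * v ^ (-x₂) /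
              ((w - v) * (1 / v + 1 / (π₂ : ℂ) - 1)))) := by
  have hR0 : (0:ℝ) < R := by linarith
  have hden : 0 < (R - 1) * (1 - ρ) := by nlinarith
  set c : ℝ := R * ρ / ((R - 1) * (1 - ρ)) with hcdef
  have hc0 : 0 ≤ c := by positivity
  have hc1 : c < 1 := (div_lt_one hden).mpr hRρ
  -- uniform constant over the two circles
  obtain ⟨C, hC⟩ : ∃ C, ∀ x ∈ (Metric.sphere (0:ℂ) R) ×ˢ (Metric.sphere (1:ℂ) ρ),
      ‖phiF p π₂ n₂ x₂ t₂ 0 x.2 * psiF p n₁ x₁ t₁ 0 x.1‖ ≤ C := by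
    apply ((isCompact_sphere (0:ℂ) R).prod
      (isCompact_sphere (1:ℂ) ρ)).exists_bound_of_continuousOn
    intro x hx
    have hw : ‖x.1‖ = R := mem_sphere_zero_iff_norm.mp hx.1
    have hv : ‖x.2 - 1‖ = ρ := mem_sphere_iff_norm.mp hx.2
    obtain ⟨hw0, hw1, hv0, hv1, -, hAv, -, -⟩ :=
      point_factsFP p hp0 hp1 ρ R hρ0 hρ1 hR _ _ hw hv
    have hD := hD_neFP p hp0 hp1 π₂ hπ₂ ρ hρ0 hρ1 _ hv hv0
    exact (((contPhiFP p π₂ n₂ x₂ t₂ 0 hv0 hv1 hAv hD).comp continuousAt_snd).mul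
      ((contPsiFP p n₁ x₁ t₁ ht₁ 0 hw0 hw1).comp continuousAt_fst)).continuousWithinAt
  have hbound : ∀ (k : ℕ) (w v : ℂ), ‖w‖ = R → ‖v - 1‖ = ρ →
      ‖phiF p π₂ n₂ x₂ t₂ k v * psiF p n₁ x₁ t₁ k w‖ ≤ C * c ^ k := by
    intro k w v hw hv
    refine ((hasSum_pointFP p π₂ hp0 hp1 hπ₂ n₁ n₂ x₁ x₂ t₁ t₂ ρ R hρ0 hρ1 hR hRρ
      w v hw hv).2 k).trans ?_
    exact mul_le_mul_of_nonneg_right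
      (hC (w, v) ⟨mem_sphere_zero_iff_norm.mpr hw, mem_sphere_iff_norm.mpr hv⟩)
      (by positivity)
  have hwmem : ∀ θ : ℝ, ‖circleMap 0 R θ‖ = R := by
    intro θ
    rw [norm_circleMap_zero, abs_of_pos hR0]
  have hvmem : ∀ θ : ℝ, ‖circleMap 1 ρ θ - 1‖ = ρ := by
    intro θ
    rw [circleMap_sub_center, norm_circleMap_zero, abs_of_pos hρ0]
  have hsummable : Summable fun k : ℕ => C * c ^ k :=
    (summable_geometric_of_lt_one hc0 hc1).mul_left C
  -- inner swap: for each v on the circle |v-1| = ρ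
  have step2 : ∀ v : ℂ, ‖v - 1‖ = ρ →
      HasSum (fun k : ℕ => phiF p π₂ n₂ x₂ t₂ k v * ∮ w in C(0,R), psiF p n₁ x₁ t₁ k w)
        (∮ w in C(0,R), gF p π₂ n₁ n₂ x₁ x₂ t₁ t₂ v w) := by
    intro v hv
    have hbase : HasSum
        (fun k : ℕ => ∮ w in C(0,R), phiF p π₂ n₂ x₂ t₂ k v * psiF p n₁ x₁ t₁ k w)
        (∮ w in C(0,R), gF p π₂ n₁ n₂ x₁ x₂ t₁ t₂ v w) := by
      simp only [circleIntegral]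
      apply intervalIntegral.hasSum_integral_of_dominated_convergence
        (bound := fun (k : ℕ) (_ : ℝ) => R * (C * c ^ k))
      · intro k
        apply Continuous.aestronglyMeasurable
        simp only [deriv_circleMap]
        apply ((continuous_circleMap 0 R).mul continuous_const).smul
        apply continuous_const.mul
        rw [continuous_iff_continuousAt]
        intro θ
        obtain ⟨hw0, hw1, -, -, -, -, -, -⟩ :=
          point_factsFP p hp0 hp1 ρ R hρ0 hρ1 hR _ _ (hwmem θ) hv
        exact (contPsiFP p n₁ x₁ t₁ ht₁ k hw0 hw1).comp
          (continuous_circleMap 0 R).continuousAt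
      · intro k
        refine Filter.Eventually.of_forall fun θ _ => ?_
        rw [norm_smul]
        have hder : ‖deriv (circleMap 0 R) θ‖ = R := by
          rw [deriv_circleMap, norm_mul, norm_circleMap_zero,
            Complex.norm_I, mul_one, abs_of_pos hR0]
        rw [hder]
        exact mul_le_mul_of_nonneg_left (hbound k _ v (hwmem θ) hv) hR0.le
      · exact Filter.Eventually.of_forall fun θ _ => hsummable.mul_left R
      · exact intervalIntegrable_const
      · refine Filter.Eventually.of_forall fun θ _ => ?_
        exact ((hasSum_pointFP p π₂ hp0 hp1 hπ₂ n₁ n₂ x₁ x₂ t₁ t₂ ρ R hρ0 hρ1 hR hRρ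
          _ v (hwmem θ) hv).1).const_smul _
    simpa only [circleIntegral.integral_const_mul] using hbase
  -- outer swap
  have hmain' : HasSum
      (fun k : ℕ => ∫ θ in (0:ℝ)..(2 * Real.pi), deriv (circleMap 1 ρ) θ •
        (phiF p π₂ n₂ x₂ t₂ k (circleMap 1 ρ θ) * ∮ w in C(0,R), psiF p n₁ x₁ t₁ k w))
      (∫ θ in (0:ℝ)..(2 * Real.pi), deriv (circleMap 1 ρ) θ •
        ∮ w in C(0,R), gF p π₂ n₁ n₂ x₁ x₂ t₁ t₂ (circleMap 1 ρ θ) w) := by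
    apply intervalIntegral.hasSum_integral_of_dominated_convergence
      (bound := fun (k : ℕ) (_ : ℝ) => ρ * (2 * Real.pi * R * (C * c ^ k)))
    · intro k
      apply Continuous.aestronglyMeasurable
      simp only [deriv_circleMap]
      apply ((continuous_circleMap 0 ρ).mul continuous_const).smul
      apply Continuous.mul _ continuous_const
      rw [continuous_iff_continuousAt]
      intro θ
      obtain ⟨-, -, hv0, hv1, -, hAv, -, -⟩ :=
        point_factsFP p hp0 hp1 ρ R hρ0 hρ1 hR _ _ (hwmem 0) (hvmem θ)
      have hD := hD_neFP p hp0 hp1 π₂ hπ₂ ρ hρ0 hρ1 _ (hvmem θ) hv0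
      exact (contPhiFP p π₂ n₂ x₂ t₂ k hv0 hv1 hAv hD).comp
        (continuous_circleMap 1 ρ).continuousAt
    · intro k
      refine Filter.Eventually.of_forall fun θ _ => ?_
      rw [norm_smul]
      have hder : ‖deriv (circleMap 1 ρ) θ‖ = ρ := by
        rw [deriv_circleMap, norm_mul, norm_circleMap_zero,
          Complex.norm_I, mul_one, abs_of_pos hρ0]
      rw [hder]
      apply mul_le_mul_of_nonneg_left _ hρ0.le
      rw [← circleIntegral.integral_const_mul]
      apply circleIntegral.norm_integral_le_of_norm_le_const hR0.le
      intro w hw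
      exact hbound k w _ (mem_sphere_zero_iff_norm.mp hw) (hvmem θ)
    · exact Filter.Eventually.of_forall fun θ _ =>
        ((hsummable.mul_left (2 * Real.pi * R)).mul_left ρ)
    · exact intervalIntegrable_const
    · refine Filter.Eventually.of_forall fun θ _ => ?_
      exact (step2 _ (hvmem θ)).const_smul _
  have hmain : HasSum
      (fun k : ℕ => ∮ v in C(1,ρ),
        (phiF p π₂ n₂ x₂ t₂ k v * ∮ w in C(0,R), psiF p n₁ x₁ t₁ k w))
      (∮ v in C(1,ρ), ∮ w in C(0,R), gF p π₂ n₁ n₂ x₁ x₂ t₁ t₂ v w) := hmain'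
  have hfin : ∀ k : ℕ, (∮ v in C(1,ρ),
      (phiF p π₂ n₂ x₂ t₂ k v * ∮ w in C(0,R), psiF p n₁ x₁ t₁ k w)) =
      (∮ v in C(1,ρ), phiF p π₂ n₂ x₂ t₂ k v) * ∮ w in C(0,R), psiF p n₁ x₁ t₁ k w := by
    intro k
    simpa only [smul_eq_mul] using circleIntegral.integral_smul_const
      (phiF p π₂ n₂ x₂ t₂ k) (∮ w in C(0,R), psiF p n₁ x₁ t₁ k w) 1 ρ
  simp only [hfin] at hmain
  have hgoalsum : (∮ v in C(1,ρ), ∮ w in C(0,R), gF p π₂ n₁ n₂ x₁ x₂ t₁ t₂ v w) =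
      ∮ v in C(1, ρ), v⁻¹ *
        ∮ w in C(0, R), w⁻¹ *
          (((1 - p : ℂ) + p / w) ^ t₁ * ((1 - p : ℂ) + p / v) ^ (-t₂) *
              (w - 1) ^ n₁ * (v - 1) ^ (-n₂) * w ^ x₁ * v ^ (-x₂) /
            ((w - v) * (1 / v + 1 / (π₂ : ℂ) - 1))) := by
    refine congrArg (fun f : ℂ → ℂ => circleIntegral f 1 ρ) (funext fun v => ?_)
    simp only [gF]
    exact circleIntegral.integral_const_mul _ _ _ _
  have final := hmain.mul_left (((2 * Real.pi * Complex.I : ℂ) ^ 2)⁻¹)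
  rw [hgoalsum] at final
  have hfe : (fun k : ℕ =>
      Psi2 p R n₁ (n₁ - (k + 1)) x₁ t₁ * Phi2 p ρ π₂ n₂ (n₂ - (k + 1)) x₂ t₂) =
      fun k : ℕ => ((2 * Real.pi * Complex.I : ℂ) ^ 2)⁻¹ *
        ((∮ v in C(1,ρ), phiF p π₂ n₂ x₂ t₂ k v) *
          ∮ w in C(0,R), psiF p n₁ x₁ t₁ k w) := by
    funext k
    simp only [Psi2, Phi2, psiF, phiF]
    ring
  rw [hfe]
  exact final
end

section
/- Let 0 < p < 1, q = 1 − p, and let γ, ω, ν > 0 be reals satisfying the hydrodynamic relation √(pω) = √γ + √(qν). Define f : ℝ → ℝ by f(w) = ω·log(q + p/w) + ν·log((w−1)/w) + γ·log w, and set w₀ = 1 + √(ν/(qγ)). Then w₀ is a double critical point of f: f′(w₀) = 0 and f″(w₀) = 0. -/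
open Real Filter

/-- `w₀ = 1 + √(ν/(qγ))` is a double critical point of
`f(w) = ω·log(q + p/w) + ν·log((w−1)/w) + γ·log w` under the hydrodynamic relation
`√(pω) = √γ + √(qν)`. -/
theorem double_critical_point (p γ ω ν : ℝ) (hp0 : 0 < p) (hp1 : p < 1)
    (hγ : 0 < γ) (hω : 0 < ω) (hν : 0 < ν)
    (hrel : Real.sqrt (p * ω) = Real.sqrt γ + Real.sqrt ((1 - p) * ν)) :
    deriv (fun w : ℝ =>
        ω * Real.log ((1 - p) + p / w) + ν * Real.log ((w - 1) / w) + γ * Real.log w)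
      (1 + Real.sqrt (ν / ((1 - p) * γ))) = 0 ∧
    deriv (deriv (fun w : ℝ =>
        ω * Real.log ((1 - p) + p / w) + ν * Real.log ((w - 1) / w) + γ * Real.log w))
      (1 + Real.sqrt (ν / ((1 - p) * γ))) = 0 := by
  set q := 1 - p with hqdef
  have hq : 0 < q := by simp only [hqdef]; linarith
  set s := Real.sqrt (ν / (q * γ)) with hsdef
  have hs : 0 < s := Real.sqrt_pos.mpr (by positivity)
  have hs2 : q * γ * s ^ 2 = ν := by
    rw [hsdef, Real.sq_sqrt (by positivity)]
    field_simp
  have hkey : p * ω = γ * (1 + q * s) ^ 2 := by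
    have h1 : p * ω = (Real.sqrt γ + Real.sqrt (q * ν)) ^ 2 := by
      rw [← hrel, Real.sq_sqrt (by positivity)]
    have h2 : Real.sqrt γ * Real.sqrt (q * ν) = q * γ * s := by
      rw [← Real.sqrt_mul hγ.le, hsdef,
        ← Real.sqrt_sq (by positivity : (0:ℝ) ≤ q * γ),
        ← Real.sqrt_mul (by positivity)]
      congr 1
      field_simp
      ring
      rw [show γ ^ 2 * q ^ 2 = (γ * q) ^ 2 by ring, Real.sqrt_sq (by positivity)]
    have h3 : Real.sqrt (q * ν) ^ 2 = q * ν := Real.sq_sqrt (by positivity)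
    have h4 : Real.sqrt γ ^ 2 = γ := Real.sq_sqrt hγ.le
    linear_combination h1 + h4 + 2 * h2 + h3 - q * hs2
  have hω' : ω = γ * (1 + q * s) ^ 2 / p := by
    rw [eq_div_iff hp0.ne']
    linarith [hkey]
  set w₀ := 1 + s with hw0def
  have hw1 : (1:ℝ) < w₀ := by simp only [hw0def]; linarith
  set g : ℝ → ℝ := fun x => -(ω * p) / (x * (q * x + p)) + ν / (x * (x - 1)) + γ / x
    with hgdef
  have hf' : ∀ x : ℝ, 1 < x → HasDerivAt (fun w : ℝ =>
      ω * Real.log (q + p / w) + ν * Real.log ((w - 1) / w) + γ * Real.log w) (g x) x := by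
    intro x hx
    have hxpos : 0 < x := by linarith
    have hx0 : x ≠ 0 := ne_of_gt hxpos
    have h1 : HasDerivAt (fun w : ℝ => q + p / w) ((0 * x - p * 1) / x ^ 2) x :=
      ((hasDerivAt_const x p).div (hasDerivAt_id x) hx0).const_add q
    have hpos1 : 0 < q + p / x := by positivity
    have h1' := (h1.log (ne_of_gt hpos1)).const_mul ω
    have h2 : HasDerivAt (fun w : ℝ => (w - 1) / w) ((1 * x - (x - 1) * 1) / x ^ 2) x :=
      ((hasDerivAt_id x).sub_const 1).div (hasDerivAt_id x) hx0
    have hpos2 : 0 < (x - 1) / x := by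
      apply div_pos <;> linarith
    have h2' := (h2.log (ne_of_gt hpos2)).const_mul ν
    have h3 := (Real.hasDerivAt_log hx0).const_mul γ
    have hsum := (h1'.add h2').add h3
    convert hsum using 1
    · rfl
    · rfl
    · rfl
    rw [hgdef]
    have hd1 : q + p / x ≠ 0 := ne_of_gt hpos1
    have hd2 : (x - 1) / x ≠ 0 := ne_of_gt hpos2
    have hd3 : x - 1 ≠ 0 := by intro h; rw [h] at hpos2; simp at hpos2
    field_simp
    ring
  have hderiv : ∀ x : ℝ, 1 < x → deriv (fun w : ℝ =>
      ω * Real.log (q + p / w) + ν * Real.log ((w - 1) / w) + γ * Real.log w) x = g x :=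
    fun x hx => (hf' x hx).deriv
  have hne1 : (1:ℝ) + s ≠ 0 := by positivity
  have hne2 : (1 - p) * (1 + s) + p ≠ 0 := by nlinarith
  have hs0 : s ≠ 0 := hs.ne'
  have hne3 : (1 + s) * (1 - p) + p ≠ 0 := by rw [mul_comm]; exact hne2
  constructor
  · rw [hderiv w₀ hw1, hgdef]
    show -(ω * p) / (w₀ * (q * w₀ + p)) + ν / (w₀ * (w₀ - 1)) + γ / w₀ = 0
    rw [hω', ← hs2, hw0def, hqdef, add_sub_cancel_left]
    field_simp
    ring
  · have hev : deriv (fun w : ℝ =>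
        ω * Real.log (q + p / w) + ν * Real.log ((w - 1) / w) + γ * Real.log w)
        =ᶠ[nhds w₀] g := by
      filter_upwards [eventually_gt_nhds hw1] with x hx using hderiv x hx
    rw [hev.deriv_eq]
    have hw0pos : 0 < w₀ := by linarith
    have hwm1 : 0 < w₀ - 1 := by linarith
    have ha : HasDerivAt (fun x : ℝ => x * (q * x + p))
        (1 * (q * w₀ + p) + w₀ * (q * 1)) w₀ :=
      (hasDerivAt_id w₀).mul (((hasDerivAt_id w₀).const_mul q).add_const p)
    have hb : HasDerivAt (fun x : ℝ => x * (x - 1))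
        (1 * (w₀ - 1) + w₀ * 1) w₀ :=
      (hasDerivAt_id w₀).mul ((hasDerivAt_id w₀).sub_const 1)
    have hna : w₀ * (q * w₀ + p) ≠ 0 := by positivity
    have hnb : w₀ * (w₀ - 1) ≠ 0 := by positivity
    have t1 := (hasDerivAt_const w₀ (-(ω * p))).div ha hna
    have t2 := (hasDerivAt_const w₀ ν).div hb hnb
    have t3 := (hasDerivAt_const w₀ γ).div (hasDerivAt_id w₀) (ne_of_gt hw0pos)
    have hg : HasDerivAt g
        ((0 * (w₀ * (q * w₀ + p)) - -(ω * p) * (1 * (q * w₀ + p) + w₀ * (q * 1))) /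
            (w₀ * (q * w₀ + p)) ^ 2 +
          (0 * (w₀ * (w₀ - 1)) - ν * (1 * (w₀ - 1) + w₀ * 1)) / (w₀ * (w₀ - 1)) ^ 2 +
          (0 * w₀ - γ * 1) / w₀ ^ 2) w₀ := by
      rw [hgdef]
      exact (t1.add t2).add t3
    rw [hg.deriv]
    rw [hω', ← hs2, hw0def, hqdef, add_sub_cancel_left]
    field_simp
    ring
end

section
/- Let 0 < p < 1, q = 1 − p, and let γ, ω, ν > 0 be reals satisfying the hydrodynamic relation √(pω) = √γ + √(qν). Define f : ℝ → ℝ by f(w) = ω·log(q + p/w) + ν·log((w−1)/w) + γ·log w, and set w₀ = 1 + √(ν/(qγ)). Then the third derivative of f at w₀ equals f‴(w₀) = 2 q³ γ^{5/2} / ( p √ω (√ω − √(pγ)) (√(pω) − √γ) ); in particular f‴(w₀) > 0. -/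
open Real

lemma third_deriv_aux (p γ ω ν : ℝ) (hp0 : 0 < p) (hp1 : p < 1) {x : ℝ} (hx : 1 < x) :
    deriv (deriv (deriv (fun w : ℝ =>
        ω * Real.log ((1 - p) + p / w) + ν * Real.log ((w - 1) / w) + γ * Real.log w))) x
    = 2 * ω * (1 - p) ^ 3 / ((1 - p) * x + p) ^ 3 + 2 * ν / (x - 1) ^ 3
      + 2 * (γ - ω - ν) / x ^ 3 := by
  have hq : 0 < 1 - p := by linarith
  set f : ℝ → ℝ := fun w =>
      ω * Real.log ((1 - p) + p / w) + ν * Real.log ((w - 1) / w) + γ * Real.log w with hfdef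
  set F : ℝ → ℝ := fun w =>
      ω * Real.log ((1 - p) * w + p) + ν * Real.log (w - 1) + (γ - ω - ν) * Real.log w with hFdef
  set g1 : ℝ → ℝ := fun w =>
      ω * ((1 - p) / ((1 - p) * w + p)) + ν * (w - 1)⁻¹ + (γ - ω - ν) * w⁻¹ with hg1def
  set g2 : ℝ → ℝ := fun w =>
      ω * (-((1 - p) * (1 - p)) / ((1 - p) * w + p) ^ 2) + ν * (-1 / (w - 1) ^ 2)
        + (γ - ω - ν) * (-1 / w ^ 2) with hg2def
  have hpos : ∀ w : ℝ, 1 < w → 0 < w ∧ 0 < w - 1 ∧ 0 < (1 - p) * w + p := by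
    intro w hw
    refine ⟨by linarith, by linarith, ?_⟩
    nlinarith
  -- f = F on Ioi 1
  have hfF : ∀ w ∈ Set.Ioi (1 : ℝ), f w = F w := by
    intro w hw
    obtain ⟨hw0, hw1, hqw⟩ := hpos w hw
    have e1 : (1 - p) + p / w = ((1 - p) * w + p) / w := by field_simp
    simp only [hfdef, hFdef, e1]
    rw [Real.log_div hqw.ne' hw0.ne', Real.log_div hw1.ne' hw0.ne']
    ring
  -- F has derivative g1
  have hlin : ∀ w : ℝ, HasDerivAt (fun w : ℝ => (1 - p) * w + p) (1 - p) w := by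
    intro w
    simpa using ((hasDerivAt_id w).const_mul (1 - p)).add_const p
  have hFd : ∀ w ∈ Set.Ioi (1 : ℝ), HasDerivAt F (g1 w) w := by
    intro w hw
    obtain ⟨hw0, hw1, hqw⟩ := hpos w hw
    have t1 : HasDerivAt (fun w : ℝ => Real.log ((1 - p) * w + p))
        ((1 - p) / ((1 - p) * w + p)) w := (hlin w).log hqw.ne'
    have t2 : HasDerivAt (fun w : ℝ => Real.log (w - 1)) (1 / (w - 1)) w := by
      simpa using ((hasDerivAt_id w).sub_const 1).log hw1.ne'
    have t3 : HasDerivAt Real.log w⁻¹ w := Real.hasDerivAt_log hw0.ne'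
    have := ((t1.const_mul ω).add (t2.const_mul ν)).add (t3.const_mul (γ - ω - ν))
    refine this.congr_deriv ?_
    simp only [hg1def]
    ring
  -- g1 has derivative g2
  have hg1d : ∀ w ∈ Set.Ioi (1 : ℝ), HasDerivAt g1 (g2 w) w := by
    intro w hw
    obtain ⟨hw0, hw1, hqw⟩ := hpos w hw
    have t1 : HasDerivAt (fun w : ℝ => ((1 - p) * w + p)⁻¹)
        (-(1 - p) / ((1 - p) * w + p) ^ 2) w := (hlin w).inv hqw.ne'
    have t2 : HasDerivAt (fun w : ℝ => (w - 1)⁻¹) (-1 / (w - 1) ^ 2) w := by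
      exact ((hasDerivAt_id' w).sub_const 1).inv hw1.ne'
    have t3 : HasDerivAt (fun w : ℝ => w⁻¹) (-1 / w ^ 2) w := by
      exact (hasDerivAt_id' w).inv hw0.ne'
    have h1 : HasDerivAt (fun w : ℝ => ω * ((1 - p) / ((1 - p) * w + p)))
        (ω * (-((1 - p) * (1 - p)) / ((1 - p) * w + p) ^ 2)) w := by
      have e : (fun w : ℝ => ω * ((1 - p) / ((1 - p) * w + p)))
          = fun w : ℝ => (ω * (1 - p)) * ((1 - p) * w + p)⁻¹ := by
        funext y; ring
      rw [e]
      refine (t1.const_mul (ω * (1 - p))).congr_deriv ?_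
      ring
    have := (h1.add (t2.const_mul ν)).add (t3.const_mul (γ - ω - ν))
    exact this
  -- g2 has derivative g3
  have hg2d : ∀ w ∈ Set.Ioi (1 : ℝ), HasDerivAt g2
      (2 * ω * (1 - p) ^ 3 / ((1 - p) * w + p) ^ 3 + 2 * ν / (w - 1) ^ 3
        + 2 * (γ - ω - ν) / w ^ 3) w := by
    intro w hw
    obtain ⟨hw0, hw1, hqw⟩ := hpos w hw
    have s1 : HasDerivAt (fun w : ℝ => (((1 - p) * w + p) ^ 2)⁻¹)
        (-(2 * ((1 - p) * w + p) * (1 - p)) / (((1 - p) * w + p) ^ 2) ^ 2) w := by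
      have := ((hlin w).pow 2).inv (pow_ne_zero 2 hqw.ne')
      refine this.congr_deriv ?_
      simp only [Pi.pow_apply]
      ring
    have s2 : HasDerivAt (fun w : ℝ => ((w - 1) ^ 2)⁻¹)
        (-(2 * (w - 1)) / ((w - 1) ^ 2) ^ 2) w := by
      have := (((hasDerivAt_id w).sub_const 1).pow 2).inv (pow_ne_zero 2 hw1.ne')
      refine this.congr_deriv ?_
      simp
    have s3 : HasDerivAt (fun w : ℝ => (w ^ 2)⁻¹) (-(2 * w) / (w ^ 2) ^ 2) w := by
      have := ((hasDerivAt_id w).pow 2).inv (pow_ne_zero 2 hw0.ne')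
      refine this.congr_deriv ?_
      simp
    have e : g2 = fun w : ℝ => (-(ω * ((1 - p) * (1 - p)))) * (((1 - p) * w + p) ^ 2)⁻¹
        + (-ν) * ((w - 1) ^ 2)⁻¹ + (-(γ - ω - ν)) * (w ^ 2)⁻¹ := by
      funext y
      simp only [hg2def]
      ring
    rw [e]
    have := ((s1.const_mul (-(ω * ((1 - p) * (1 - p))))).add (s2.const_mul (-ν))).add
      (s3.const_mul (-(γ - ω - ν)))
    refine this.congr_deriv ?_
    field_simp
  -- now transfer
  have hd1 : ∀ w ∈ Set.Ioi (1 : ℝ), deriv f w = g1 w := by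
    intro w hw
    have hev : f =ᶠ[nhds w] F := by
      filter_upwards [isOpen_Ioi.mem_nhds hw] with y hy using hfF y hy
    rw [hev.deriv_eq, (hFd w hw).deriv]
  have hd2 : ∀ w ∈ Set.Ioi (1 : ℝ), deriv (deriv f) w = g2 w := by
    intro w hw
    have hev : deriv f =ᶠ[nhds w] g1 := by
      filter_upwards [isOpen_Ioi.mem_nhds hw] with y hy using hd1 y hy
    rw [hev.deriv_eq, (hg1d w hw).deriv]
  have hev : deriv (deriv f) =ᶠ[nhds x] g2 := by
    filter_upwards [isOpen_Ioi.mem_nhds hx] with y hy using hd2 y hy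
  rw [hev.deriv_eq, (hg2d x hx).deriv]

/-- the third derivative of
`f(w) = ω·log(q + p/w) + ν·log((w−1)/w) + γ·log w` at the double critical point
`w₀ = 1 + √(ν/(qγ))` equals `2q³γ^{5/2}/(p√ω(√ω − √(pγ))(√(pω) − √γ))`, and is positive. -/
theorem third_derivative_at_critical_point (p γ ω ν : ℝ) (hp0 : 0 < p) (hp1 : p < 1)
    (hγ : 0 < γ) (hω : 0 < ω) (hν : 0 < ν)
    (hrel : Real.sqrt (p * ω) = Real.sqrt γ + Real.sqrt ((1 - p) * ν)) :
    deriv (deriv (deriv (fun w : ℝ =>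
        ω * Real.log ((1 - p) + p / w) + ν * Real.log ((w - 1) / w) + γ * Real.log w)))
      (1 + Real.sqrt (ν / ((1 - p) * γ))) =
      2 * (1 - p) ^ 3 * γ ^ ((5 : ℝ) / 2) /
        (p * Real.sqrt ω * (Real.sqrt ω - Real.sqrt (p * γ)) *
          (Real.sqrt (p * ω) - Real.sqrt γ)) ∧
    0 < deriv (deriv (deriv (fun w : ℝ =>
        ω * Real.log ((1 - p) + p / w) + ν * Real.log ((w - 1) / w) + γ * Real.log w)))
      (1 + Real.sqrt (ν / ((1 - p) * γ))) := by
  have hq : 0 < 1 - p := by linarith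
  set a := Real.sqrt γ with ha_def
  set b := Real.sqrt ((1 - p) * ν) with hb_def
  have ha0 : 0 < a := Real.sqrt_pos.mpr hγ
  have hb0 : 0 < b := Real.sqrt_pos.mpr (by positivity)
  have ha2 : a ^ 2 = γ := Real.sq_sqrt hγ.le
  have hb2 : b ^ 2 = (1 - p) * ν := Real.sq_sqrt (by positivity)
  have hpω : p * ω = (a + b) ^ 2 := by
    have h := Real.sq_sqrt (mul_nonneg hp0.le hω.le)
    rw [hrel] at h; linarith
  set sp := Real.sqrt p with hsp_def
  have hsp0 : 0 < sp := Real.sqrt_pos.mpr hp0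
  have hsp2 : sp ^ 2 = p := Real.sq_sqrt hp0.le
  -- the critical point
  have hs : Real.sqrt (ν / ((1 - p) * γ)) = b / ((1 - p) * a) := by
    have e : ν / ((1 - p) * γ) = ((1 - p) * ν) / (((1 - p)) ^ 2 * γ) := by
      field_simp
    have hden : Real.sqrt ((1 - p) ^ 2 * γ) = (1 - p) * a := by
      rw [Real.sqrt_mul (by positivity), Real.sqrt_sq hq.le]
    rw [e, Real.sqrt_div (by positivity), hden]
  set w₀ := 1 + Real.sqrt (ν / ((1 - p) * γ)) with hw₀def
  have hw₀ : w₀ = 1 + b / ((1 - p) * a) := by rw [hw₀def, hs]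
  have hw₀1 : 1 < w₀ := by
    rw [hw₀]; have : 0 < b / ((1 - p) * a) := by positivity
    linarith
  rw [third_deriv_aux p γ ω ν hp0 hp1 hw₀1]
  -- sqrt facts
  have hsw : Real.sqrt ω = (a + b) / sp := by
    rw [eq_div_iff hsp0.ne', mul_comm, ← Real.sqrt_mul hp0.le, hrel]
  have hspγ : Real.sqrt (p * γ) = sp * a := Real.sqrt_mul hp0.le γ
  have hso : Real.sqrt (p * ω) - Real.sqrt γ = b := by rw [hrel]; ring
  have hDen : p * Real.sqrt ω * (Real.sqrt ω - Real.sqrt (p * γ))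
      = (a + b) * ((1 - p) * a + b) := by
    rw [hsw, hspγ, ← hsp2]
    field_simp
    ring
  have ha5 : γ ^ ((5 : ℝ) / 2) = a ^ 5 := by
    rw [show ((5 : ℝ) / 2) = (1 / 2 : ℝ) * (5 : ℕ) by norm_num,
      Real.rpow_mul hγ.le, Real.rpow_natCast, ← Real.sqrt_eq_rpow]
  have hωv : ω = (a + b) ^ 2 / p := by field_simp [← hpω]; linear_combination hpω
  have hνv : ν = b ^ 2 / (1 - p) := by field_simp [hb2]; linear_combination -hb2
  have hγv : γ = a ^ 2 := ha2.symm
  have hab : 0 < (1 - p) * a + b := by positivity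
  -- main algebraic identity
  have key : 2 * ω * (1 - p) ^ 3 / ((1 - p) * w₀ + p) ^ 3 + 2 * ν / (w₀ - 1) ^ 3
      + 2 * (γ - ω - ν) / w₀ ^ 3
      = 2 * (1 - p) ^ 3 * γ ^ ((5 : ℝ) / 2) /
        (p * Real.sqrt ω * (Real.sqrt ω - Real.sqrt (p * γ)) *
          (Real.sqrt (p * ω) - Real.sqrt γ)) := by
    rw [hDen, hso, ha5, hw₀, hωv, hνv, hγv]
    have h1 : (1 - p) * (1 + b / ((1 - p) * a)) + p = (a + b) / a := by
      field_simp; ring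
    have h2 : 1 + b / ((1 - p) * a) - 1 = b / ((1 - p) * a) := by ring
    have h3 : 1 + b / ((1 - p) * a) = ((1 - p) * a + b) / ((1 - p) * a) := by
      field_simp
    rw [h1, h2, h3]
    have hab' : 0 < a + b := by positivity
    field_simp
    ring
  refine ⟨key, ?_⟩
  rw [key, hDen, hso, ha5]
  positivity
end

section
/- Let 0 < p < 1, q = 1 − p. Let ζ : ℝ × ℝ → ℝ be differentiable at (θ₀, χ₀) with partial derivatives ζ_θ = ∂ζ/∂θ(θ₀,χ₀) and ζ_χ = ∂ζ/∂χ(θ₀,χ₀) satisfying |ζ_χ| ≤ 1, and let θ, ν, χ : ℝ → ℝ be differentiable at r₀ with θ(r₀) = θ₀, χ(r₀) = χ₀, ν(r₀) > 0. Set ζ₀ = ζ(θ₀,χ₀), γ = (ζ₀ − χ₀)/2 > 0, ω = (ζ₀ + χ₀)/2 > 0, and assume the hydrodynamic constraint √(p(ζ(θ(r),χ(r)) + χ(r))) − √(ζ(θ(r),χ(r)) − χ(r)) − √(2q ν(r)) = 0 holds for all r in a neighborhood of r₀ (with ζ(θ(r),χ(r)) ± χ(r) > 0 there). Then the function W(r)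 = 1 + √( 2ν(r) / ( q (ζ(θ(r),χ(r)) − χ(r)) ) ) is differentiable at r₀ with W′(r₀) = ( √p / ( 2γq ( √(pγ)(1 + ζ_χ) + √ω(1 − ζ_χ) ) ) ) · [ q ν′(r₀) ( ζ₀ − χ₀ ζ_χ ) / ( √(pω) − √γ ) − θ′(r₀) ζ_θ ( √(pω) − √γ ) ]. -/
open Real


set_option maxHeartbeats 1000000 in
/-- differentiability and explicit derivative of the critical-point
function `W(r) = 1 + √(2ν(r)/(q(ζ(θ(r),χ(r)) − χ(r))))` along a space-like path,
under the hydrodynamic constraint. -/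
theorem critical_point_derivative (p : ℝ) (hp0 : 0 < p) (hp1 : p < 1)
    (ζ : ℝ × ℝ → ℝ) (θ ν χ : ℝ → ℝ) (r₀ θ₀ χ₀ : ℝ)
    (L : ℝ × ℝ →L[ℝ] ℝ) (hζ : HasFDerivAt ζ L (θ₀, χ₀))
    (ζθ ζχ : ℝ) (hζθ : ζθ = L (1, 0)) (hζχ : ζχ = L (0, 1)) (hζχ1 : |ζχ| ≤ 1)
    (θ' ν' χ' : ℝ)
    (hθd : HasDerivAt θ θ' r₀) (hνd : HasDerivAt ν ν' r₀) (hχd : HasDerivAt χ χ' r₀)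
    (hθ0 : θ r₀ = θ₀) (hχ0 : χ r₀ = χ₀) (hν0 : 0 < ν r₀)
    (ζ₀ γ ω : ℝ) (hζ₀ : ζ₀ = ζ (θ₀, χ₀)) (hγdef : γ = (ζ₀ - χ₀) / 2)
    (hωdef : ω = (ζ₀ + χ₀) / 2) (hγ : 0 < γ) (hω : 0 < ω)
    (hcon : ∀ᶠ r in nhds r₀,
      0 < ζ (θ r, χ r) + χ r ∧ 0 < ζ (θ r, χ r) - χ r ∧
        Real.sqrt (p * (ζ (θ r, χ r) + χ r)) - Real.sqrt (ζ (θ r, χ r) - χ r) -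
          Real.sqrt (2 * (1 - p) * ν r) = 0) :
    HasDerivAt
      (fun r => 1 + Real.sqrt (2 * ν r / ((1 - p) * (ζ (θ r, χ r) - χ r))))
      ((Real.sqrt p /
          (2 * γ * (1 - p) *
            (Real.sqrt (p * γ) * (1 + ζχ) + Real.sqrt ω * (1 - ζχ)))) *
        ((1 - p) * ν' * (ζ₀ - χ₀ * ζχ) /
            (Real.sqrt (p * ω) - Real.sqrt γ) -
          θ' * ζθ * (Real.sqrt (p * ω) - Real.sqrt γ)))
      r₀ := by
  have hq : (0:ℝ) < 1 - p := by linarith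
  set sp := Real.sqrt p with hsp_def
  set u := Real.sqrt ω with hu_def
  set v := Real.sqrt γ with hv_def
  have hsp2 : sp ^ 2 = p := Real.sq_sqrt hp0.le
  have hu2 : u ^ 2 = ω := Real.sq_sqrt hω.le
  have hv2 : v ^ 2 = γ := Real.sq_sqrt hγ.le
  have hspp : 0 < sp := Real.sqrt_pos.2 hp0
  have hup : 0 < u := Real.sqrt_pos.2 hω
  have hvp : 0 < v := Real.sqrt_pos.2 hγ
  -- derivative of the composite ζ (θ r, χ r)
  have hpath : HasDerivAt (fun r => (θ r, χ r)) (θ', χ') r₀ := hθd.prodMk hχd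
  have hζ' : HasFDerivAt ζ L (θ r₀, χ r₀) := by rw [hθ0, hχ0]; exact hζ
  have hZd : HasDerivAt (fun r => ζ (θ r, χ r)) (θ' * ζθ + χ' * ζχ) r₀ := by
    have h := hζ'.comp_hasDerivAt r₀ hpath
    have hLval : L (θ', χ') = θ' * ζθ + χ' * ζχ := by
      have h1 : (θ', χ') = θ' • ((1:ℝ), (0:ℝ)) + χ' • ((0:ℝ), (1:ℝ)) := by
        simp [Prod.ext_iff]
      rw [h1, map_add, map_smul, map_smul, hζθ, hζχ, smul_eq_mul, smul_eq_mul]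
    rwa [hLval] at h
  -- values at r₀
  have hZ0 : ζ (θ r₀, χ r₀) = ζ₀ := by rw [hθ0, hχ0, hζ₀]
  have hA0 : ζ (θ r₀, χ r₀) + χ r₀ = 2 * ω := by rw [hZ0, hχ0, hωdef]; ring
  have hB0 : ζ (θ r₀, χ r₀) - χ r₀ = 2 * γ := by rw [hZ0, hχ0, hγdef]; ring
  -- constraint at r₀ and the basic inequality √(pω) > √γ
  obtain ⟨hA0p, hB0p, hcon0⟩ := hcon.self_of_nhds
  have hs2p : (0:ℝ) < Real.sqrt 2 := Real.sqrt_pos.2 (by norm_num)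
  have hsA0 : Real.sqrt (p * (ζ (θ r₀, χ r₀) + χ r₀)) = Real.sqrt 2 * (sp * u) := by
    rw [hA0, Real.sqrt_mul hp0.le, Real.sqrt_mul (by norm_num : (0:ℝ) ≤ 2)]
    ring
  have hsB0 : Real.sqrt (ζ (θ r₀, χ r₀) - χ r₀) = Real.sqrt 2 * v := by
    rw [hB0, Real.sqrt_mul (by norm_num : (0:ℝ) ≤ 2)]
  have hsν0 : Real.sqrt (2 * (1 - p) * ν r₀) = Real.sqrt 2 * (sp * u - v) := by
    rw [hsA0, hsB0] at hcon0; linarith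
  have hsuv : 0 < sp * u - v := by
    have h1 : 0 < Real.sqrt (2 * (1 - p) * ν r₀) :=
      Real.sqrt_pos.2 (by positivity)
    rw [hsν0] at h1
    nlinarith
  have hsuv' : sp * u - v ≠ 0 := ne_of_gt hsuv
  -- derivatives of the building blocks
  have hAd : HasDerivAt (fun r => ζ (θ r, χ r) + χ r) (θ' * ζθ + χ' * ζχ + χ') r₀ :=
    hZd.add hχd
  have hBd : HasDerivAt (fun r => ζ (θ r, χ r) - χ r) (θ' * ζθ + χ' * ζχ - χ') r₀ :=
    hZd.sub hχd
  have hpAd : HasDerivAt (fun r => p * (ζ (θ r, χ r) + χ r))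
      (p * (θ' * ζθ + χ' * ζχ + χ')) r₀ := hAd.const_mul p
  -- derivative of the constraint function, which is eventually 0
  have hs1 : HasDerivAt (fun r => Real.sqrt (p * (ζ (θ r, χ r) + χ r)))
      (p * (θ' * ζθ + χ' * ζχ + χ') / (2 * Real.sqrt (p * (ζ (θ r₀, χ r₀) + χ r₀)))) r₀ :=
    hpAd.sqrt (by rw [hA0]; positivity)
  have hs2 : HasDerivAt (fun r => Real.sqrt (ζ (θ r, χ r) - χ r))
      ((θ' * ζθ + χ' * ζχ - χ') / (2 * Real.sqrt (ζ (θ r₀, χ r₀) - χ r₀))) r₀ :=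
    hBd.sqrt (by rw [hB0]; positivity)
  have hνd2 : HasDerivAt (fun r => 2 * (1 - p) * ν r) (2 * (1 - p) * ν') r₀ :=
    hνd.const_mul _
  have hs3 : HasDerivAt (fun r => Real.sqrt (2 * (1 - p) * ν r))
      (2 * (1 - p) * ν' / (2 * Real.sqrt (2 * (1 - p) * ν r₀))) r₀ :=
    hνd2.sqrt (by positivity)
  have hCd : HasDerivAt (fun r =>
      Real.sqrt (p * (ζ (θ r, χ r) + χ r)) - Real.sqrt (ζ (θ r, χ r) - χ r) -
        Real.sqrt (2 * (1 - p) * ν r))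
      (p * (θ' * ζθ + χ' * ζχ + χ') / (2 * Real.sqrt (p * (ζ (θ r₀, χ r₀) + χ r₀))) -
        (θ' * ζθ + χ' * ζχ - χ') / (2 * Real.sqrt (ζ (θ r₀, χ r₀) - χ r₀)) -
        2 * (1 - p) * ν' / (2 * Real.sqrt (2 * (1 - p) * ν r₀))) r₀ :=
    (hs1.sub hs2).sub hs3
  have hC0 : HasDerivAt (fun r =>
      Real.sqrt (p * (ζ (θ r, χ r) + χ r)) - Real.sqrt (ζ (θ r, χ r) - χ r) -
        Real.sqrt (2 * (1 - p) * ν r)) (0:ℝ) r₀ := by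
    apply (hasDerivAt_const r₀ (0:ℝ)).congr_of_eventuallyEq
    filter_upwards [hcon] with r hr
    exact hr.2.2
  have hc0 := hCd.unique hC0
  rw [hsA0, hsB0, hsν0] at hc0
  -- solve the constraint-derivative relation for ν'
  have hν'eq : ν' = (p * (θ' * ζθ + χ' * ζχ + χ') / (sp * u) -
      (θ' * ζθ + χ' * ζχ - χ') / v) * (sp * u - v) / (2 * (1 - p)) := by
    have h1 : Real.sqrt 2 ≠ 0 := ne_of_gt hs2p
    have h2 : sp * u ≠ 0 := by positivity
    have h3 : v ≠ 0 := ne_of_gt hvp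
    have h5 : (1:ℝ) - p ≠ 0 := ne_of_gt hq
    have hc0' : p * (θ' * ζθ + χ' * ζχ + χ') / (2 * (sp * u)) -
        (θ' * ζθ + χ' * ζχ - χ') / (2 * v) -
        2 * (1 - p) * ν' / (2 * (sp * u - v)) = 0 := by
      have h := congrArg (fun x => Real.sqrt 2 * x) hc0
      simp only [mul_zero] at h
      rw [← h]
      field_simp
    field_simp at hc0' ⊢
    linear_combination (-1 : ℝ) * hc0'
  -- the comparison function G agrees with the target near r₀
  have hWG : (fun r => 1 + Real.sqrt (2 * ν r / ((1 - p) * (ζ (θ r, χ r) - χ r))))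
      =ᶠ[nhds r₀] (fun r =>
        1 + (Real.sqrt (p * (ζ (θ r, χ r) + χ r) / (ζ (θ r, χ r) - χ r)) - 1) / (1 - p)) := by
    filter_upwards [hcon] with r hr
    obtain ⟨hAr, hBr, hcr⟩ := hr
    set X := Real.sqrt (p * (ζ (θ r, χ r) + χ r)) with hXdef
    set sB := Real.sqrt (ζ (θ r, χ r) - χ r) with hsBdef
    set sq := Real.sqrt (1 - p) with hsqdef
    have hBs : 0 < sB := Real.sqrt_pos.2 hBr
    have hqs : 0 < sq := Real.sqrt_pos.2 hq
    have hq2 : sq ^ 2 = 1 - p := Real.sq_sqrt hq.le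
    have h1 : Real.sqrt (2 * ν r / ((1 - p) * (ζ (θ r, χ r) - χ r)))
        = Real.sqrt (2 * ν r) / (sq * sB) := by
      rw [Real.sqrt_div' _ (by positivity), Real.sqrt_mul hq.le]
    have h3 : Real.sqrt (p * (ζ (θ r, χ r) + χ r) / (ζ (θ r, χ r) - χ r)) = X / sB :=
      Real.sqrt_div (by positivity) _
    have h2 : Real.sqrt (2 * (1 - p) * ν r) = sq * Real.sqrt (2 * ν r) := by
      rw [show 2 * (1 - p) * ν r = (1 - p) * (2 * ν r) by ring, Real.sqrt_mul hq.le]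
    have h4 : Real.sqrt (2 * ν r) = (X - sB) / sq := by
      rw [eq_div_iff (ne_of_gt hqs)]
      rw [h2] at hcr
      linear_combination -hcr
    show 1 + Real.sqrt (2 * ν r / ((1 - p) * (ζ (θ r, χ r) - χ r)))
        = 1 + (Real.sqrt (p * (ζ (θ r, χ r) + χ r) / (ζ (θ r, χ r) - χ r)) - 1) / (1 - p)
    rw [h1, h4, h3, ← hq2]
    field_simp
  -- derivative of G
  have hQd : HasDerivAt (fun r => p * (ζ (θ r, χ r) + χ r) / (ζ (θ r, χ r) - χ r))
      ((p * (θ' * ζθ + χ' * ζχ + χ') * (ζ (θ r₀, χ r₀) - χ r₀) -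
          p * (ζ (θ r₀, χ r₀) + χ r₀) * (θ' * ζθ + χ' * ζχ - χ')) /
        (ζ (θ r₀, χ r₀) - χ r₀) ^ 2) r₀ :=
    hpAd.div hBd (by rw [hB0]; positivity)
  have hvalpos : p * (ζ (θ r₀, χ r₀) + χ r₀) / (ζ (θ r₀, χ r₀) - χ r₀) ≠ 0 := by
    rw [hA0, hB0]; positivity
  have hSd := hQd.sqrt hvalpos
  have hGd := ((hSd.sub_const 1).div_const (1 - p)).const_add 1
  have hval : Real.sqrt (p * (ζ (θ r₀, χ r₀) + χ r₀) / (ζ (θ r₀, χ r₀) - χ r₀))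
      = sp * u / v := by
    rw [hA0, hB0, show p * (2 * ω) / (2 * γ) = p * ω / γ by
        field_simp,
      Real.sqrt_div (by positivity), Real.sqrt_mul hp0.le]
  rw [hval, hA0, hB0] at hGd
  -- transfer to the target function
  have hW := hGd.congr_of_eventuallyEq hWG
  convert hW using 1
  · rfl
  · rfl
  -- final algebraic identity
  have hDpos : 0 < sp * v * (1 + ζχ) + u * (1 - ζχ) := by
    have h1 : -1 ≤ ζχ := neg_le_of_abs_le hζχ1
    have h2 : ζχ ≤ 1 := le_of_abs_le hζχ1
    rcases lt_or_ge ζχ 1 with h | h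
    · nlinarith [mul_pos hspp hvp, hup]
    · have : ζχ = 1 := le_antisymm h2 h
      rw [this]
      nlinarith [mul_pos hspp hvp]
  have hpγs : Real.sqrt (p * γ) = sp * v := by rw [Real.sqrt_mul hp0.le]
  have hpωs : Real.sqrt (p * ω) = sp * u := by rw [Real.sqrt_mul hp0.le]
  have hζ₀v : ζ₀ = v ^ 2 + u ^ 2 := by rw [hu2, hv2, hγdef, hωdef]; ring
  have hχ₀v : χ₀ = u ^ 2 - v ^ 2 := by rw [hu2, hv2]; rw [hγdef, hωdef]; ring
  rw [hpγs, hpωs, hν'eq, hζ₀v, hχ₀v, ← hu2, ← hv2, ← hsp2]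
  have hq' : 1 - sp ^ 2 ≠ 0 := by rw [hsp2]; exact ne_of_gt hq
  have hD' : sp * v * (1 + ζχ) + u * (1 - ζχ) ≠ 0 := ne_of_gt hDpos
  field_simp
  ring
end

section
/- Let 0 < p < 1 and let ζ : ℝ → ℝ be differentiable with |ζ′(χ)| ≤ 1 for every χ ∈ ℝ. Let I ⊆ ℝ be an interval on which ζ(χ) + χ > 0 and ζ(χ) − χ > 0. Then the function F(χ) = √(p(ζ(χ) + χ)) − √(ζ(χ) − χ) is strictly monotone increasing on I; consequently, for every real c there is at most one χ ∈ I with F(χ) = c. -/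
open Real

/-- the hydrodynamic function `F(χ) = √(p(ζ(χ)+χ)) − √(ζ(χ)−χ)` is
strictly monotone increasing on an interval where `ζ(χ)+χ > 0` and `ζ(χ)−χ > 0`,
provided `|ζ'| ≤ 1` everywhere; consequently for every `c` there is at most one
solution of `F(χ) = c` in the interval. -/
theorem hydrodynamic_strict_mono (p : ℝ) (hp0 : 0 < p) (hp1 : p < 1)
    (ζ : ℝ → ℝ) (hζ : Differentiable ℝ ζ) (hζ' : ∀ χ : ℝ, |deriv ζ χ| ≤ 1)
    (I : Set ℝ) (hI : Convex ℝ I)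
    (hpos : ∀ χ ∈ I, 0 < ζ χ + χ ∧ 0 < ζ χ - χ) :
    StrictMonoOn (fun χ => Real.sqrt (p * (ζ χ + χ)) - Real.sqrt (ζ χ - χ)) I ∧
      ∀ c : ℝ, ∀ χ₁ ∈ I, ∀ χ₂ ∈ I,
        Real.sqrt (p * (ζ χ₁ + χ₁)) - Real.sqrt (ζ χ₁ - χ₁) = c →
        Real.sqrt (p * (ζ χ₂ + χ₂)) - Real.sqrt (ζ χ₂ - χ₂) = c → χ₁ = χ₂ := by
  set F : ℝ → ℝ := fun χ => Real.sqrt (p * (ζ χ + χ)) - Real.sqrt (ζ χ - χ) with hF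
  have key : ∀ χ ∈ I, HasDerivAt F
      (p * (deriv ζ χ + 1) / (2 * Real.sqrt (p * (ζ χ + χ)))
        + (1 - deriv ζ χ) / (2 * Real.sqrt (ζ χ - χ))) χ := by
    intro χ hχ
    obtain ⟨h1, h2⟩ := hpos χ hχ
    have hζd := (hζ χ).hasDerivAt
    have hu : HasDerivAt (fun χ => p * (ζ χ + χ)) (p * (deriv ζ χ + 1)) χ :=
      (hζd.add (hasDerivAt_id χ)).const_mul p
    have hv : HasDerivAt (fun χ => ζ χ - χ) (deriv ζ χ - 1) χ :=
      hζd.sub (hasDerivAt_id χ)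
    have hs1 : HasDerivAt (fun χ => Real.sqrt (p * (ζ χ + χ)))
        (p * (deriv ζ χ + 1) / (2 * Real.sqrt (p * (ζ χ + χ)))) χ :=
      hu.sqrt (ne_of_gt (mul_pos hp0 h1))
    have hs2 : HasDerivAt (fun χ => Real.sqrt (ζ χ - χ))
        ((deriv ζ χ - 1) / (2 * Real.sqrt (ζ χ - χ))) χ :=
      hv.sqrt (ne_of_gt h2)
    have : HasDerivAt F _ χ := hs1.sub hs2
    convert this using 1
    ring
  have mono : StrictMonoOn F I := by
    apply StrictMonoOn.mono (s := I) ?_ (le_refl I)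
    apply strictMonoOn_of_deriv_pos hI
    · intro χ hχ
      exact (key χ hχ).continuousAt.continuousWithinAt
    · intro χ hχ
      have hχI : χ ∈ I := interior_subset hχ
      obtain ⟨h1, h2⟩ := hpos χ hχI
      rw [(key χ hχI).deriv]
      have hd := abs_le.mp (hζ' χ)
      have hA : 0 < Real.sqrt (p * (ζ χ + χ)) := Real.sqrt_pos.mpr (mul_pos hp0 h1)
      have hB : 0 < Real.sqrt (ζ χ - χ) := Real.sqrt_pos.mpr h2
      rcases lt_or_eq_of_le hd.2 with h | h
      · have t2 : 0 < (1 - deriv ζ χ) / (2 * Real.sqrt (ζ χ - χ)) :=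
          div_pos (by linarith) (by linarith)
        have t1 : 0 ≤ p * (deriv ζ χ + 1) / (2 * Real.sqrt (p * (ζ χ + χ))) :=
          div_nonneg (mul_nonneg hp0.le (by linarith)) (by linarith)
        linarith
      · have t1 : 0 < p * (deriv ζ χ + 1) / (2 * Real.sqrt (p * (ζ χ + χ))) :=
          div_pos (mul_pos hp0 (by rw [h]; norm_num)) (by linarith)
        have t2 : 0 ≤ (1 - deriv ζ χ) / (2 * Real.sqrt (ζ χ - χ)) :=
          div_nonneg (by linarith) (by linarith)
        linarith
  refine ⟨mono, fun c χ₁ h₁ χ₂ h₂ e₁ e₂ => ?_⟩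
  exact mono.injOn h₁ h₂ (by simp only [hF]; rw [e₁, e₂])
end
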